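/- arXiv:1611.00829 — 6 statements merged into one kernel-verified Lean document; each statement's English description precedes it below -/
import Mathlib

section
/- If K ⊂ ℝ^d is a convex body such that w(K, u) ≥ δ for every unit vector u, where δ > 0, then K contains a closed Euclidean ball of diameter δ/d (that is, of radius δ/(2d)). -/
open MeasureTheory Set RealInnerProductSpace

/-- The directional width of a set `K` along a direction `u`. -/
noncomputable def width {d : ℕ} (K : Set (EuclideanSpace ℝ (Fin d)))
    (u : EuclideanSpace ℝ (Fin d)) : ℝ :=
  sSup ((fun x => ⟪u, x⟫) '' K) - sInf ((fun x => ⟪u, x⟫) '' K)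

/-- The centroid of a set `K` in `ℝ^d`. -/
noncomputable def centroid {d : ℕ} (K : Set (EuclideanSpace ℝ (Fin d))) :
    EuclideanSpace ℝ (Fin d) :=
  (volume K).toReal⁻¹ • ∫ x in K, x

open Metric

set_option maxHeartbeats 1000000


variable {d : ℕ}

/-- Padding a sum over `Fin m` to a sum over `Fin n`. -/
lemma sum_pad {M : Type*} [AddCommMonoid M] {m n : ℕ} (hmn : m ≤ n) (G : Fin m → M) :
    ∑ i : Fin n, (if h : (i : ℕ) < m then G ⟨i, h⟩ else 0) = ∑ j : Fin m, G j := by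
  have h1 := Fin.sum_univ_eq_sum_range (fun k => if h : k < m then G ⟨k, h⟩ else 0) n
  have h2 := Fin.sum_univ_eq_sum_range (fun k => if h : k < m then G ⟨k, h⟩ else 0) m
  have h3 : ∑ k ∈ Finset.range n, (if h : k < m then G ⟨k, h⟩ else 0)
      = ∑ k ∈ Finset.range m, (if h : k < m then G ⟨k, h⟩ else 0) := by
    refine (Finset.sum_subset (Finset.range_subset_range.2 hmn) fun x _ hx => ?_).symm
    rw [dif_neg (by simpa using hx)]
  have h4 : ∑ j : Fin m, (if h : (j : ℕ) < m then G ⟨j, h⟩ else 0) = ∑ j : Fin m, G j := by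
    refine Finset.sum_congr rfl fun j _ => ?_
    rw [dif_pos j.isLt]
  calc ∑ i : Fin n, (if h : (i : ℕ) < m then G ⟨i, h⟩ else 0)
      = ∑ k ∈ Finset.range n, (if h : k < m then G ⟨k, h⟩ else 0) := h1
    _ = ∑ k ∈ Finset.range m, (if h : k < m then G ⟨k, h⟩ else 0) := h3
    _ = ∑ j : Fin m, (if h : (j : ℕ) < m then G ⟨j, h⟩ else 0) := h2.symm
    _ = ∑ j : Fin m, G j := h4

/-- Carathéodory with a fixed index type `Fin (d+1)`. -/
lemma exists_fin_comb {s : Set (EuclideanSpace ℝ (Fin d))} {x : EuclideanSpace ℝ (Fin d)}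
    (hx : x ∈ convexHull ℝ s) :
    ∃ (w : Fin (d + 1) → ℝ) (u : Fin (d + 1) → EuclideanSpace ℝ (Fin d)),
      (∀ i, 0 ≤ w i) ∧ ∑ i, w i = 1 ∧ (∀ i, u i ∈ s) ∧ ∑ i, w i • u i = x := by
  rw [convexHull_eq_union] at hx
  simp only [Set.mem_iUnion] at hx
  obtain ⟨t, hts, hai, hxt⟩ := hx
  have hm : t.card ≤ d + 1 := by
    have h1 := hai.card_le_finrank_succ
    have h2 : Module.finrank ℝ (vectorSpan ℝ (Set.range ((↑) : ↥t → EuclideanSpace ℝ (Fin d))))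
        ≤ d := by
      have := Submodule.finrank_le
        (vectorSpan ℝ (Set.range ((↑) : ↥t → EuclideanSpace ℝ (Fin d))))
      simpa [finrank_euclideanSpace_fin] using this
    rw [Fintype.card_coe] at h1
    omega
  have htne : t.Nonempty := by
    rcases t.eq_empty_or_nonempty with h | h
    · subst h; simp at hxt
    · exact h
  rw [Finset.convexHull_eq] at hxt
  obtain ⟨W, hW0, hW1, hWx⟩ := hxt
  rw [Finset.centerMass_eq_of_sum_1 _ _ hW1] at hWx
  obtain ⟨y₀, hy₀⟩ := htne
  set m := t.card with hmdef
  let e : Fin m ≃ ↥t := t.equivFin.symm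
  refine ⟨fun i => if h : (i : ℕ) < m then W ((e ⟨i, h⟩ : ↥t) : EuclideanSpace ℝ (Fin d)) else 0,
      fun i => if h : (i : ℕ) < m then ((e ⟨i, h⟩ : ↥t) : EuclideanSpace ℝ (Fin d)) else y₀,
      ?_, ?_, ?_, ?_⟩
  · intro i
    dsimp only
    by_cases h : (i : ℕ) < m
    · rw [dif_pos h]; exact hW0 _ (e ⟨i, h⟩).2
    · rw [dif_neg h]
  · rw [sum_pad hm (fun j => W ((e j : ↥t) : EuclideanSpace ℝ (Fin d)))]
    rw [Equiv.sum_comp e (fun y : ↥t => W (y : EuclideanSpace ℝ (Fin d)))]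
    rw [Finset.sum_coe_sort t (fun y => W y)]
    exact hW1
  · intro i
    dsimp only
    by_cases h : (i : ℕ) < m
    · rw [dif_pos h]; exact hts (e ⟨i, h⟩).2
    · rw [dif_neg h]; exact hts hy₀
  · have : ∀ i : Fin (d + 1),
        (if h : (i : ℕ) < m then W ((e ⟨i, h⟩ : ↥t) : EuclideanSpace ℝ (Fin d)) else 0) •
          (if h : (i : ℕ) < m then ((e ⟨i, h⟩ : ↥t) : EuclideanSpace ℝ (Fin d)) else y₀)
        = if h : (i : ℕ) < m then
            (fun j : Fin m => W ((e j : ↥t) : EuclideanSpace ℝ (Fin d)) •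
              ((e j : ↥t) : EuclideanSpace ℝ (Fin d))) ⟨i, h⟩ else 0 := by
      intro i
      by_cases h : (i : ℕ) < m
      · simp [h]
      · simp [h]
    rw [Finset.sum_congr rfl fun i _ => this i]
    rw [sum_pad hm (fun j : Fin m => W ((e j : ↥t) : EuclideanSpace ℝ (Fin d)) •
      ((e j : ↥t) : EuclideanSpace ℝ (Fin d)))]
    rw [Equiv.sum_comp e (fun y : ↥t => W (y : EuclideanSpace ℝ (Fin d)) •
      ((y : ↥t) : EuclideanSpace ℝ (Fin d)))]
    rw [Finset.sum_coe_sort t (fun y => W y • y)]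
    simpa using hWx

/-- If `0` is in the closure of the convex hull of a compact set `N`, it is an exact convex
combination of at most `d+1` points of `N`. -/
lemma exists_comb_of_mem_closure {N : Set (EuclideanSpace ℝ (Fin d))}
    (hNc : IsCompact N) (h0 : (0 : EuclideanSpace ℝ (Fin d)) ∈ closure (convexHull ℝ N)) :
    ∃ (w : Fin (d + 1) → ℝ) (u : Fin (d + 1) → EuclideanSpace ℝ (Fin d)),
      (∀ i, 0 ≤ w i) ∧ ∑ i, w i = 1 ∧ (∀ i, u i ∈ N) ∧ ∑ i, w i • u i = 0 := by
  rw [mem_closure_iff_seq_limit] at h0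
  obtain ⟨x, hx, hlim⟩ := h0
  choose w u hw0 hw1 huN hsum using fun n => exists_fin_comb (hx n)
  set S : Set ((Fin (d + 1) → ℝ) × (Fin (d + 1) → EuclideanSpace ℝ (Fin d))) :=
    (stdSimplex ℝ (Fin (d + 1))) ×ˢ (Set.pi Set.univ fun _ => N) with hS
  have hScomp : IsCompact S :=
    (isCompact_stdSimplex (𝕜 := ℝ) (ι := Fin (d + 1))).prod (isCompact_univ_pi fun _ => hNc)
  have hz : ∀ n, (w n, u n) ∈ S := by
    intro n
    constructor
    · exact ⟨hw0 n, hw1 n⟩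
    · intro i _; exact huN n i
  obtain ⟨p, hpS, φ, hφ, htend⟩ := hScomp.tendsto_subseq hz
  have hFcont : Continuous fun q : (Fin (d + 1) → ℝ) × (Fin (d + 1) → EuclideanSpace ℝ (Fin d)) =>
      ∑ i, q.1 i • q.2 i := by
    refine continuous_finset_sum _ fun i _ => ?_
    exact ((continuous_apply i).comp continuous_fst).smul
      ((continuous_apply i).comp continuous_snd)
  have h1 : Filter.Tendsto (fun n => ∑ i, (w (φ n)) i • (u (φ n)) i) Filter.atTop
      (nhds (∑ i, p.1 i • p.2 i)) := (hFcont.tendsto p).comp htend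
  have h2 : Filter.Tendsto (fun n => ∑ i, (w (φ n)) i • (u (φ n)) i) Filter.atTop
      (nhds 0) := by
    have : (fun n => ∑ i, (w (φ n)) i • (u (φ n)) i) = x ∘ φ := by
      funext n; exact hsum (φ n)
    rw [this]
    exact hlim.comp hφ.tendsto_atTop
  have hp0 : ∑ i, p.1 i • p.2 i = 0 := tendsto_nhds_unique h1 h2
  exact ⟨p.1, p.2, hpS.1.1, hpS.1.2, fun i => hpS.2 i (Set.mem_univ i), hp0⟩

/-- A point satisfying all support inequalities of a closed convex set lies in the set. -/
lemma mem_of_inner_le {K : Set (EuclideanSpace ℝ (Fin d))}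
    (hKconv : Convex ℝ K) (hKclosed : IsClosed K) (hK : K.Nonempty)
    {y : EuclideanSpace ℝ (Fin d)}
    (hy : ∀ u : EuclideanSpace ℝ (Fin d), ‖u‖ = 1 →
      ⟪u, y⟫ ≤ sSup ((fun x => ⟪u, x⟫) '' K)) : y ∈ K := by
  by_contra hyK
  obtain ⟨f, s, hfK, hfy⟩ := geometric_hahn_banach_closed_point hKconv hKclosed hyK
  set v := (InnerProductSpace.toDual ℝ (EuclideanSpace ℝ (Fin d))).symm f with hv
  have hfx : ∀ x, ⟪v, x⟫ = f x := fun x => InnerProductSpace.toDual_symm_apply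
  have hv0 : v ≠ 0 := by
    intro h0
    obtain ⟨a, ha⟩ := hK
    have h1 : f a < s := hfK a ha
    have h2 : f a = 0 := by rw [← hfx a, h0, inner_zero_left]
    have h3 : f y = 0 := by rw [← hfx y, h0, inner_zero_left]
    linarith
  have hvn : 0 < ‖v‖ := norm_pos_iff.2 hv0
  set u := ‖v‖⁻¹ • v with hu
  have hun : ‖u‖ = 1 := by
    rw [hu, norm_smul, norm_inv, norm_norm, inv_mul_cancel₀ (ne_of_gt hvn)]
  have hub : sSup ((fun x => ⟪u, x⟫) '' K) ≤ s / ‖v‖ := by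
    refine csSup_le (hK.image _) ?_
    rintro _ ⟨x, hxK, rfl⟩
    dsimp only
    rw [real_inner_smul_left, hfx]
    rw [div_eq_inv_mul]
    exact mul_le_mul_of_nonneg_left (le_of_lt (hfK x hxK)) (by positivity)
  have hlb : s / ‖v‖ < ⟪u, y⟫ := by
    rw [real_inner_smul_left, hfx, div_eq_inv_mul]
    exact mul_lt_mul_of_pos_left hfy (by positivity)
  exact absurd (hy u hun) (by linarith)

theorem contains_ball_of_width' {d : ℕ} (K : Set (EuclideanSpace ℝ (Fin d)))
    (hKcompact : IsCompact K) (hKconv : Convex ℝ K) (hKint : (interior K).Nonempty)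
    (δ : ℝ) (hδ : 0 < δ)
    (hw : ∀ u : EuclideanSpace ℝ (Fin d), ‖u‖ = 1 →
      δ ≤ sSup ((fun x => ⟪u, x⟫) '' K) - sInf ((fun x => ⟪u, x⟫) '' K)) :
    ∃ c : EuclideanSpace ℝ (Fin d), Metric.closedBall c (δ / (2 * d)) ⊆ K := by
  obtain ⟨x₀, hx₀⟩ := hKint
  have hx₀K : x₀ ∈ K := interior_subset hx₀
  have hK : K.Nonempty := ⟨x₀, hx₀K⟩
  rcases Nat.eq_zero_or_pos d with hd | hd
  · subst hd
    refine ⟨x₀, ?_⟩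
    have h0 : (δ / (2 * ((0:ℕ):ℝ)) : ℝ) = 0 := by norm_num
    rw [h0, closedBall_zero]
    simpa using hx₀K
  have hKclosed := hKcompact.isClosed
  obtain ⟨R, hR⟩ := hKcompact.isBounded.exists_norm_le
  have hR0 : 0 ≤ R := le_trans (norm_nonneg x₀) (hR x₀ hx₀K)
  have hKc : Kᶜ.Nonempty := by
    refine ⟨(R + 1) • EuclideanSpace.single (⟨0, hd⟩ : Fin d) (1 : ℝ), fun hmem => ?_⟩
    have h1 := hR _ hmem
    rw [norm_smul, EuclideanSpace.norm_single, Real.norm_eq_abs,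
      abs_of_nonneg (by linarith), norm_one, mul_one] at h1
    linarith
  obtain ⟨c₀, hc₀K, hmax⟩ := hKcompact.exists_isMaxOn hK (continuous_infDist_pt Kᶜ).continuousOn
  set r0 := infDist c₀ Kᶜ with hr0
  have hr0pos : 0 < r0 := by
    have h1 : x₀ ∉ closure Kᶜ := by rw [closure_compl]; simpa using hx₀
    have h2 : 0 < infDist x₀ Kᶜ := by
      rcases (infDist_nonneg (x := x₀) (s := Kᶜ)).lt_or_eq with h | h
      · exact h
      · exact absurd ((mem_closure_iff_infDist_zero hKc).2 h.symm) h1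
    exact lt_of_lt_of_le h2 ((isMaxOn_iff.1 hmax) x₀ hx₀K)
  have hball : closedBall c₀ r0 ⊆ K := by
    have h1 : ball c₀ r0 ⊆ K := by
      intro z hz
      by_contra hzK
      have hz2 : z ∈ Kᶜ := hzK
      have hz3 : infDist c₀ Kᶜ ≤ dist c₀ z := infDist_le_dist_of_mem hz2
      exact absurd hz3 (not_le.2 (mem_ball'.1 hz))
    calc closedBall c₀ r0 = closure (ball c₀ r0) := (closure_ball c₀ (ne_of_gt hr0pos)).symm
      _ ⊆ closure K := closure_mono h1
      _ = K := hKclosed.closure_eq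
  set h : EuclideanSpace ℝ (Fin d) → ℝ := fun u => sSup ((fun x => ⟪u, x⟫) '' K) with hh
  have hbdd : ∀ u : EuclideanSpace ℝ (Fin d), BddAbove ((fun x => ⟪u, x⟫) '' K) := fun u =>
    (hKcompact.image (continuous_const.inner continuous_id)).bddAbove
  have hle : ∀ u : EuclideanSpace ℝ (Fin d), ∀ x ∈ K, ⟪u, x⟫ ≤ h u :=
    fun u x hx => le_csSup (hbdd u) ⟨x, hx, rfl⟩
  have hsl : ∀ u : EuclideanSpace ℝ (Fin d), ‖u‖ = 1 → ⟪u, c₀⟫ + r0 ≤ h u := by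
    intro u hu
    have hmem : c₀ + r0 • u ∈ K := by
      refine hball ?_
      rw [mem_closedBall, dist_self_add_left, norm_smul, Real.norm_eq_abs,
        abs_of_nonneg hr0pos.le, hu, mul_one]
    have h1 := hle u _ hmem
    rw [inner_add_right, real_inner_smul_right, real_inner_self_eq_norm_sq, hu] at h1
    simpa using h1
  have hcont : Continuous h := by
    have hlip : ∀ u v : EuclideanSpace ℝ (Fin d), h u ≤ h v + R * ‖u - v‖ := by
      intro u v
      refine csSup_le (hK.image _) ?_
      rintro _ ⟨x, hxK, rfl⟩
      have h1 : ⟪u, x⟫ = ⟪v, x⟫ + ⟪u - v, x⟫ := by rw [← inner_add_left]; norm_num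
      have h2 : ⟪u - v, x⟫ ≤ ‖u - v‖ * ‖x‖ := real_inner_le_norm _ _
      have h3 : ‖u - v‖ * ‖x‖ ≤ R * ‖u - v‖ := by
        rw [mul_comm]
        exact mul_le_mul_of_nonneg_right (hR x hxK) (norm_nonneg _)
      have h4 := hle v x hxK
      dsimp only
      linarith
    have hlw : LipschitzWith (Real.toNNReal R) h := by
      refine LipschitzWith.of_dist_le_mul fun u v => ?_
      rw [Real.dist_eq, Real.coe_toNNReal R hR0, dist_eq_norm, abs_sub_le_iff]
      constructor
      · have := hlip u v; linarith
      · have := hlip v u; rw [show v - u = -(u - v) from (neg_sub u v).symm, norm_neg] at this; linarith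
    exact hlw.continuous
  set N : Set (EuclideanSpace ℝ (Fin d)) := {u | ‖u‖ = 1 ∧ h u = ⟪u, c₀⟫ + r0} with hN
  have hNclosed : IsClosed N := by
    have h1 : IsClosed {u : EuclideanSpace ℝ (Fin d) | ‖u‖ = 1} :=
      isClosed_eq continuous_norm continuous_const
    have h2 : IsClosed {u : EuclideanSpace ℝ (Fin d) | h u = ⟪u, c₀⟫ + r0} :=
      isClosed_eq hcont ((continuous_id.inner continuous_const).add continuous_const)
    exact h1.inter h2
  have hNcomp : IsCompact N := by
    refine (isCompact_closedBall (0 : EuclideanSpace ℝ (Fin d)) 1).of_isClosed_subset hNclosed ?_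
    intro u hu
    rw [mem_closedBall, dist_zero_right, hu.1]
  by_cases h0 : (0 : EuclideanSpace ℝ (Fin d)) ∈ closure (convexHull ℝ N)
  · -- extract convex combination of contact normals and conclude
    obtain ⟨w, u, hw0, hw1, huN, hsum⟩ := exists_comb_of_mem_closure hNcomp h0
    obtain ⟨j, -, hj⟩ := Finset.exists_max_image Finset.univ w Finset.univ_nonempty
    have hjcard : 1 ≤ ((d : ℝ) + 1) * w j := by
      have h2 : ∑ i, w i ≤ ∑ _i : Fin (d + 1), w j :=
        Finset.sum_le_sum fun i _ => hj i (Finset.mem_univ i)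
      rw [Finset.sum_const, Finset.card_univ, Fintype.card_fin, nsmul_eq_mul] at h2
      push_cast at h2
      linarith [hw1]
    have hwjpos : 0 < w j := by nlinarith [hw0 j, Nat.cast_nonneg (α := ℝ) d]
    have hclaim : ∀ x ∈ K, w j * (h (u j) - ⟪u j, x⟫) ≤ r0 := by
      intro x hx
      have hzero : ∑ i, w i * ⟪u i, x - c₀⟫ = 0 := by
        have e1 : ⟪∑ i, w i • u i, x - c₀⟫ = ∑ i, w i * ⟪u i, x - c₀⟫ := by
          rw [sum_inner]
          exact Finset.sum_congr rfl fun i _ => real_inner_smul_left _ _ _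
        rw [hsum, inner_zero_left] at e1
        exact e1.symm
      have hterm : ∀ i, w i * ⟪u i, x - c₀⟫ ≤ w i * r0 := by
        intro i
        refine mul_le_mul_of_nonneg_left ?_ (hw0 i)
        have h1 := hle (u i) x hx
        have h2 := (huN i).2
        rw [inner_sub_right]
        linarith
      have hsplit : w j * ⟪u j, x - c₀⟫ + ∑ i ∈ Finset.univ.erase j, w i * ⟪u i, x - c₀⟫ = 0 :=
        (Finset.add_sum_erase Finset.univ (fun i => w i * ⟪u i, x - c₀⟫)
          (Finset.mem_univ j)).trans hzero
      have hsum2 : ∑ i ∈ Finset.univ.erase j, w i * ⟪u i, x - c₀⟫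
          ≤ ∑ i ∈ Finset.univ.erase j, w i * r0 :=
        Finset.sum_le_sum fun i _ => hterm i
      have hsum3 : ∑ i ∈ Finset.univ.erase j, w i * r0 = (1 - w j) * r0 := by
        rw [← Finset.sum_mul]
        have h5 : w j + ∑ i ∈ Finset.univ.erase j, w i = 1 :=
          (Finset.add_sum_erase Finset.univ w (Finset.mem_univ j)).trans hw1
        have : ∑ i ∈ Finset.univ.erase j, w i = 1 - w j := by linarith
        rw [this]
      have h4 : (w j - 1) * r0 ≤ w j * ⟪u j, x - c₀⟫ := by nlinarith
      have h5 : h (u j) = ⟪u j, c₀⟫ + r0 := (huN j).2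
      have h6 : w j * (h (u j) - ⟪u j, x⟫) = w j * r0 - w j * ⟪u j, x - c₀⟫ := by
        rw [h5, inner_sub_right]; ring
      rw [h6]
      nlinarith
    have hwd := hw (u j) (huN j).1
    have hsInf : h (u j) - r0 / w j ≤ sInf ((fun x => ⟪u j, x⟫) '' K) := by
      refine le_csInf (hK.image _) ?_
      rintro _ ⟨x, hx, rfl⟩
      have h1 := hclaim x hx
      have h2 : r0 / w j * w j = r0 := div_mul_cancel₀ r0 hwjpos.ne'
      dsimp only
      nlinarith
    have hδwj : δ * w j ≤ r0 := by
      have h7 : δ ≤ r0 / w j := by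
        have h8 : sSup ((fun x => ⟪u j, x⟫) '' K) = h (u j) := rfl
        rw [h8] at hwd
        linarith
      calc δ * w j ≤ r0 / w j * w j := mul_le_mul_of_nonneg_right h7 hwjpos.le
        _ = r0 := div_mul_cancel₀ r0 hwjpos.ne'
    refine ⟨c₀, subset_trans (closedBall_subset_closedBall ?_) hball⟩
    have hd1 : (1 : ℝ) ≤ d := by exact_mod_cast hd
    rw [div_le_iff₀ (by positivity : (0 : ℝ) < 2 * d)]
    nlinarith [mul_le_mul_of_nonneg_left hδwj (by positivity : (0 : ℝ) ≤ (d : ℝ) + 1),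
      mul_le_mul_of_nonneg_left hjcard hδ.le,
      mul_le_mul_of_nonneg_left (show (d : ℝ) + 1 ≤ 2 * d by linarith) hr0pos.le]
  · exfalso
    obtain ⟨v, hv1, ε, hε, hsep⟩ : ∃ v : EuclideanSpace ℝ (Fin d), ‖v‖ = 1 ∧
        ∃ ε : ℝ, 0 < ε ∧ ∀ u ∈ N, ⟪u, v⟫ < -ε := by
      rcases N.eq_empty_or_nonempty with hNe | hNe
      · exact ⟨EuclideanSpace.single (⟨0, hd⟩ : Fin d) (1 : ℝ),
          by simp [EuclideanSpace.norm_single], 1, one_pos, by simp [hNe]⟩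
      · obtain ⟨g, s, hgK, hgy⟩ := geometric_hahn_banach_closed_point
          ((convex_convexHull ℝ N).closure) isClosed_closure h0
        have hs0 : s < 0 := by simpa using hgy
        set wv := (InnerProductSpace.toDual ℝ (EuclideanSpace ℝ (Fin d))).symm g with hwv
        have hgx : ∀ x, ⟪wv, x⟫ = g x := fun x => InnerProductSpace.toDual_symm_apply
        have hwv0 : wv ≠ 0 := by
          intro hzero
          obtain ⟨a, haN⟩ := hNe
          have h1 : g a < s := hgK a (subset_closure (subset_convexHull ℝ N haN))
          rw [← hgx a, hzero, inner_zero_left] at h1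
          linarith
        have hnv : 0 < ‖wv‖ := norm_pos_iff.2 hwv0
        refine ⟨‖wv‖⁻¹ • wv,
          by rw [norm_smul, norm_inv, norm_norm, inv_mul_cancel₀ hnv.ne'],
          (-s) / ‖wv‖, div_pos (by linarith) hnv, ?_⟩
        intro a haN
        have h1 : g a < s := hgK a (subset_closure (subset_convexHull ℝ N haN))
        rw [real_inner_smul_right, real_inner_comm, hgx]
        rw [neg_div, neg_neg]
        rw [div_eq_inv_mul]
        exact mul_lt_mul_of_pos_left h1 (by positivity)
    set A := {u : EuclideanSpace ℝ (Fin d) | ‖u‖ = 1 ∧ -ε ≤ ⟪u, v⟫} with hA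
    have hAclosed : IsClosed A := by
      have h1 : IsClosed {u : EuclideanSpace ℝ (Fin d) | ‖u‖ = 1} :=
        isClosed_eq continuous_norm continuous_const
      have h2 : IsClosed {u : EuclideanSpace ℝ (Fin d) | -ε ≤ ⟪u, v⟫} :=
        isClosed_le continuous_const (continuous_id.inner continuous_const)
      exact h1.inter h2
    have hAcomp : IsCompact A := by
      refine (isCompact_closedBall (0 : EuclideanSpace ℝ (Fin d)) 1).of_isClosed_subset
        hAclosed ?_
      intro a ha
      rw [mem_closedBall, dist_zero_right, ha.1]
    have hAne : A.Nonempty := by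
      refine ⟨v, hv1, ?_⟩
      rw [real_inner_self_eq_norm_sq, hv1]
      nlinarith
    set g2 : EuclideanSpace ℝ (Fin d) → ℝ := fun u => h u - ⟪u, c₀⟫ - r0 with hg2
    have hg2cont : Continuous g2 :=
      (hcont.sub (continuous_id.inner continuous_const)).sub continuous_const
    obtain ⟨u₁, hu₁A, hminOn⟩ := hAcomp.exists_isMinOn hAne hg2cont.continuousOn
    set η := g2 u₁ with hη
    have hηpos : 0 < η := by
      have h1 : 0 ≤ η := by
        have := hsl u₁ hu₁A.1
        simp only [hη, hg2]
        linarith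
      rcases h1.lt_or_eq with h2 | h2
      · exact h2
      · exfalso
        have h3 : u₁ ∈ N := by
          refine ⟨hu₁A.1, ?_⟩
          have : h u₁ - ⟪u₁, c₀⟫ - r0 = 0 := by
            simp only [hη, hg2] at h2
            linarith
          linarith
        exact absurd hu₁A.2 (not_le.2 (hsep u₁ h3))
    set t := η / 2 with ht
    set ρ := min (t * ε) (η / 2) with hρ
    have htpos : 0 < t := by positivity
    have hρpos : 0 < ρ := lt_min (by positivity) (by positivity)
    have hkey : ∀ u : EuclideanSpace ℝ (Fin d), ‖u‖ = 1 →
        ⟪u, c₀ + t • v⟫ + (r0 + ρ) ≤ h u := by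
      intro u hu
      rw [inner_add_right, real_inner_smul_right]
      by_cases hcase : -ε ≤ ⟪u, v⟫
      · have h1 : η ≤ g2 u := (isMinOn_iff.1 hminOn) u ⟨hu, hcase⟩
        have h2 : ⟪u, v⟫ ≤ 1 := by
          have h3 := real_inner_le_norm u v
          rw [hu, hv1] at h3
          simpa using h3
        have h3 : ρ ≤ η / 2 := min_le_right _ _
        have h4 : t * ⟪u, v⟫ ≤ t := by nlinarith
        simp only [hg2] at h1
        have h5 : t + ρ ≤ η := by
          rw [ht] at h4 ⊢
          linarith
        linarith
      · push_neg at hcase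
        have h1 : 0 ≤ g2 u := by
          have := hsl u hu
          simp only [hg2]
          linarith
        have h2 : t * ⟪u, v⟫ ≤ t * (-ε) := by nlinarith
        have h3 : ρ ≤ t * ε := min_le_left _ _
        simp only [hg2] at h1
        linarith
    have hsub : closedBall (c₀ + t • v) (r0 + ρ) ⊆ K := by
      intro y hyB
      refine mem_of_inner_le hKconv hKclosed hK ?_
      intro u hu
      have h1 : ⟪u, y⟫ = ⟪u, c₀ + t • v⟫ + ⟪u, y - (c₀ + t • v)⟫ := by
        rw [← inner_add_right]
        congr 1
        abel
      have h2 : ⟪u, y - (c₀ + t • v)⟫ ≤ r0 + ρ := by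
        have h3 := real_inner_le_norm u (y - (c₀ + t • v))
        rw [hu, one_mul] at h3
        refine h3.trans ?_
        rw [← dist_eq_norm]
        exact mem_closedBall.1 hyB
      have h4 := hkey u hu
      calc ⟪u, y⟫ ≤ ⟪u, c₀ + t • v⟫ + (r0 + ρ) := by linarith
        _ ≤ h u := h4
    have hc'K : c₀ + t • v ∈ K := hsub (mem_closedBall_self (by positivity))
    have hges : r0 + ρ ≤ infDist (c₀ + t • v) Kᶜ := by
      by_contra hlt
      push_neg at hlt
      obtain ⟨z, hzKc, hz⟩ := (infDist_lt_iff hKc).1 hlt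
      exact hzKc (hsub (by rw [mem_closedBall, dist_comm]; exact hz.le))
    have hfin := (isMaxOn_iff.1 hmax) _ hc'K
    linarith


/-- If every directional width of a convex body `K ⊆ ℝ^d` is at least `δ > 0`, then `K`
contains a closed ball of diameter `δ/d`, i.e. of radius `δ/(2d)`. -/
theorem contains_ball_of_width {d : ℕ} (K : Set (EuclideanSpace ℝ (Fin d)))
    (hKcompact : IsCompact K) (hKconv : Convex ℝ K) (hKint : (interior K).Nonempty)
    (δ : ℝ) (hδ : 0 < δ)
    (hw : ∀ u : EuclideanSpace ℝ (Fin d), ‖u‖ = 1 → δ ≤ width K u) :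
    ∃ c : EuclideanSpace ℝ (Fin d), Metric.closedBall c (δ / (2 * d)) ⊆ K :=
  contains_ball_of_width' K hKcompact hKconv hKint δ hδ hw
end

section
/- If K ⊂ ℝ^k is a convex body such that w(K, u) ≥ δ for every unit vector u, where δ > 0, then vol(K) ≥ γ_k·(δ/(2k))^k, where γ_k is the volume of the k-dimensional unit ball. -/
open MeasureTheory Set RealInnerProductSpace
open Pointwise
open InnerProductSpace

lemma meas_simplex_set (n : ℕ) (t : ℝ) :
    MeasurableSet {w : Fin n → ℝ | (∀ i, 0 ≤ w i) ∧ ∑ i, w i ≤ t} := by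
  have h1 : MeasurableSet {w : Fin n → ℝ | ∀ i, 0 ≤ w i} := by
    rw [show {w : Fin n → ℝ | ∀ i, 0 ≤ w i} = ⋂ i, {w : Fin n → ℝ | 0 ≤ w i} by
      ext w; simp]
    exact MeasurableSet.iInter fun i => measurableSet_le measurable_const (measurable_pi_apply i)
  have h2 : MeasurableSet {w : Fin n → ℝ | ∑ i, w i ≤ t} :=
    measurableSet_le (Finset.measurable_sum _ fun i _ => measurable_pi_apply i) measurable_const
  exact h1.inter h2

lemma vol_univ_fin0 : volume (univ : Set (Fin 0 → ℝ)) = 1 := by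
  simp [MeasureTheory.volume_pi, Measure.pi_univ]

lemma vol_pi_simplex : ∀ (n : ℕ) (t : ℝ), 0 ≤ t →
    volume {w : Fin n → ℝ | (∀ i, 0 ≤ w i) ∧ ∑ i, w i ≤ t}
      = ENNReal.ofReal (t ^ n / n.factorial) := by
  intro n
  induction n with
  | zero =>
    intro t ht
    have h : {w : Fin 0 → ℝ | (∀ i, 0 ≤ w i) ∧ ∑ i, w i ≤ t} = univ := by
      ext w; simp [ht]
    rw [h, vol_univ_fin0]
    simp
  | succ n ih =>
    intro t ht
    set S : Set (Fin (n+1) → ℝ) := {w | (∀ i, 0 ≤ w i) ∧ ∑ i, w i ≤ t} with hS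
    have e := MeasurableEquiv.piFinSuccAbove (fun _ : Fin (n+1) => ℝ) 0
    have hmp := (MeasureTheory.volume_preserving_piFinSuccAbove (fun _ : Fin (n+1) => ℝ) 0).symm
    have hpre : (MeasurableEquiv.piFinSuccAbove (fun _ : Fin (n+1) => ℝ) 0).symm ⁻¹' S
        = {p : ℝ × (Fin n → ℝ) | (0 ≤ p.1 ∧ ∀ i, 0 ≤ p.2 i) ∧ p.1 + ∑ i, p.2 i ≤ t} := by
      ext ⟨a, y⟩
      simp only [MeasurableEquiv.piFinSuccAbove_symm_apply, mem_preimage, hS, mem_setOf_eq,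
        Fin.insertNth_zero, Fin.sum_cons, Fin.forall_fin_succ, Fin.cons_zero, Fin.cons_succ]
      constructor
      · rintro ⟨⟨h0, hs⟩, hsum⟩; exact ⟨⟨h0, fun i => by simpa using hs i⟩, by simpa using hsum⟩
      · rintro ⟨⟨h0, hs⟩, hsum⟩; exact ⟨⟨h0, fun i => by simpa using hs i⟩, by simpa using hsum⟩
    have hvol : volume S = (volume : Measure ℝ).prod (volume : Measure (Fin n → ℝ))
        ((MeasurableEquiv.piFinSuccAbove (fun _ : Fin (n+1) => ℝ) 0).symm ⁻¹' S) := by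
      rw [← MeasureTheory.Measure.volume_eq_prod,
        hmp.measure_preimage (meas_simplex_set (n+1) t).nullMeasurableSet]
    have hmeas2 : MeasurableSet {p : ℝ × (Fin n → ℝ) | (0 ≤ p.1 ∧ ∀ i, 0 ≤ p.2 i) ∧ p.1 + ∑ i, p.2 i ≤ t} := by
      have c1 : MeasurableSet {p : ℝ × (Fin n → ℝ) | 0 ≤ p.1} :=
        measurableSet_le measurable_const measurable_fst
      have c2 : MeasurableSet {p : ℝ × (Fin n → ℝ) | ∀ i, 0 ≤ p.2 i} := by
        rw [show {p : ℝ × (Fin n → ℝ) | ∀ i, 0 ≤ p.2 i} = ⋂ i, {p : ℝ × (Fin n → ℝ) | 0 ≤ p.2 i} by ext p; simp]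
        exact MeasurableSet.iInter fun i =>
          measurableSet_le measurable_const (measurable_snd.eval)
      have c3 : MeasurableSet {p : ℝ × (Fin n → ℝ) | p.1 + ∑ i, p.2 i ≤ t} :=
        measurableSet_le (measurable_fst.add
          (Finset.measurable_sum _ fun i _ => (measurable_pi_apply i).comp measurable_snd))
          measurable_const
      exact (c1.inter c2).inter c3
    rw [hvol, hpre, MeasureTheory.Measure.prod_apply hmeas2]
    have hslice : ∀ a : ℝ,
        (volume (Prod.mk a ⁻¹' {p : ℝ × (Fin n → ℝ) | (0 ≤ p.1 ∧ ∀ i, 0 ≤ p.2 i) ∧ p.1 + ∑ i, p.2 i ≤ t}))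
          = Set.indicator (Icc 0 t) (fun a => ENNReal.ofReal ((t-a) ^ n / n.factorial)) a := by
      intro a
      rcases le_or_gt 0 a with ha0 | ha0
      · rcases le_or_gt a t with hat | hat
        · have : Prod.mk a ⁻¹' {p : ℝ × (Fin n → ℝ) | (0 ≤ p.1 ∧ ∀ i, 0 ≤ p.2 i) ∧ p.1 + ∑ i, p.2 i ≤ t}
              = {y : Fin n → ℝ | (∀ i, 0 ≤ y i) ∧ ∑ i, y i ≤ t - a} := by
            ext y; simp only [mem_preimage, mem_setOf_eq, ha0, true_and]
            constructor
            · rintro ⟨h1, h2⟩; exact ⟨h1, by linarith⟩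
            · rintro ⟨h1, h2⟩; exact ⟨h1, by linarith⟩
          rw [this, ih (t - a) (by linarith), Set.indicator_of_mem (Set.mem_Icc.mpr ⟨ha0, hat⟩)]
        · have : Prod.mk a ⁻¹' {p : ℝ × (Fin n → ℝ) | (0 ≤ p.1 ∧ ∀ i, 0 ≤ p.2 i) ∧ p.1 + ∑ i, p.2 i ≤ t}
              = (∅ : Set (Fin n → ℝ)) := by
            ext y; simp only [mem_preimage, mem_setOf_eq, mem_empty_iff_false, iff_false]
            rintro ⟨⟨-, h1⟩, h2⟩
            have : 0 ≤ ∑ i, y i := Finset.sum_nonneg fun i _ => h1 i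
            linarith
          rw [this, Set.indicator_of_notMem (by simp [hat.not_ge] : a ∉ Icc 0 t)]
          simp
      · have : Prod.mk a ⁻¹' {p : ℝ × (Fin n → ℝ) | (0 ≤ p.1 ∧ ∀ i, 0 ≤ p.2 i) ∧ p.1 + ∑ i, p.2 i ≤ t}
            = (∅ : Set (Fin n → ℝ)) := by
          ext y; simp only [mem_preimage, mem_setOf_eq, mem_empty_iff_false, iff_false]
          rintro ⟨⟨h0, -⟩, -⟩; linarith
        rw [this, Set.indicator_of_notMem (by simp [ha0.not_ge] : a ∉ Icc 0 t)]
        simp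
    simp_rw [hslice]
    rw [MeasureTheory.lintegral_indicator measurableSet_Icc]
    have hint : IntegrableOn (fun a : ℝ => (t - a) ^ n / n.factorial) (Icc 0 t) volume := by
      apply Continuous.integrableOn_Icc
      continuity
    have hnn : 0 ≤ᵐ[volume.restrict (Icc 0 t)] fun a : ℝ => (t - a) ^ n / n.factorial := by
      filter_upwards [MeasureTheory.ae_restrict_mem measurableSet_Icc] with a ha
      have : a ≤ t := ha.2
      have h1 : (0:ℝ) ≤ (t - a) ^ n := pow_nonneg (by linarith) n
      positivity
    rw [← MeasureTheory.ofReal_integral_eq_lintegral_ofReal hint hnn]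
    have : ∫ a in Icc 0 t, (t - a) ^ n / n.factorial
          = ∫ a in (0 : ℝ)..t, (t - a) ^ n / n.factorial := by
        rw [intervalIntegral.integral_of_le ht, MeasureTheory.integral_Icc_eq_integral_Ioc]
    rw [this]
    have h2 : ∫ a in (0:ℝ)..t, (t - a) ^ n / n.factorial
        = (∫ a in (0:ℝ)..t, (t - a) ^ n) / n.factorial := by
      simp [intervalIntegral.integral_div]
    rw [h2, intervalIntegral.integral_comp_sub_left (fun x => x ^ n) t]
    rw [sub_self, sub_zero, integral_pow]
    rw [zero_pow (by omega : n + 1 ≠ 0), Nat.factorial_succ]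
    congr 1
    rw [sub_zero]
    push_cast
    rw [div_div]

lemma vol_euc_simplex (k : ℕ) :
    volume {w : EuclideanSpace ℝ (Fin k) | (∀ i, 0 ≤ w i) ∧ ∑ i, w i ≤ 1}
      = ENNReal.ofReal (1 / k.factorial) := by
  have hmp := (EuclideanSpace.volume_preserving_symm_measurableEquiv_toLp (Fin k))
  have hpre : {w : EuclideanSpace ℝ (Fin k) | (∀ i, 0 ≤ w i) ∧ ∑ i, w i ≤ 1}
      = ((MeasurableEquiv.toLp 2 (Fin k → ℝ)).symm) ⁻¹'
        {w : Fin k → ℝ | (∀ i, 0 ≤ w i) ∧ ∑ i, w i ≤ 1} := rfl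
  rw [hpre, hmp.measure_preimage (meas_simplex_set k 1).nullMeasurableSet,
    vol_pi_simplex k 1 zero_le_one, one_pow]

lemma vol_ball_le (k : ℕ) :
    volume (Metric.closedBall (0 : EuclideanSpace ℝ (Fin k)) 1) ≤ ENNReal.ofReal (2 ^ k) := by
  have hsub : Metric.closedBall (0 : EuclideanSpace ℝ (Fin k)) 1
      ⊆ ((MeasurableEquiv.toLp 2 (Fin k → ℝ)).symm) ⁻¹' (univ.pi fun _ : Fin k => Icc (-1 : ℝ) 1) := by
    intro x hx
    simp only [mem_preimage, mem_pi, mem_univ, forall_true_left, mem_Icc]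
    intro i
    have hn : ‖x‖ ≤ 1 := by simpa using mem_closedBall_iff_norm.mp hx
    have hxi : ((MeasurableEquiv.toLp 2 (Fin k → ℝ)).symm) x i = x i := rfl
    rw [hxi]
    have h1 : |x i| ≤ ‖x‖ := by
      have heq := EuclideanSpace.norm_eq x
      simp only [Real.norm_eq_abs, sq_abs] at heq
      rw [heq]
      have h2 : x i ^ 2 ≤ ∑ j, x j ^ 2 := by
        apply Finset.single_le_sum (f := fun j => x j ^ 2) (fun j _ => sq_nonneg _) (Finset.mem_univ i)
      calc |x i| = Real.sqrt (x i ^ 2) := (Real.sqrt_sq_eq_abs _).symm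
        _ ≤ Real.sqrt (∑ j, x j ^ 2) := Real.sqrt_le_sqrt h2
    have := abs_le.mp (h1.trans hn)
    exact ⟨this.1, this.2⟩
  calc volume (Metric.closedBall (0 : EuclideanSpace ℝ (Fin k)) 1)
      ≤ volume (((MeasurableEquiv.toLp 2 (Fin k → ℝ)).symm) ⁻¹' (univ.pi fun _ : Fin k => Icc (-1:ℝ) 1)) :=
        measure_mono hsub
    _ = volume (univ.pi fun _ : Fin k => Icc (-1:ℝ) 1) :=
        (EuclideanSpace.volume_preserving_symm_measurableEquiv_toLp (Fin k)).measure_preimage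
          ((MeasurableSet.univ_pi fun _ => measurableSet_Icc).nullMeasurableSet)
    _ = ∏ _i : Fin k, volume (Icc (-1:ℝ) 1) := volume_pi_pi _
    _ = ENNReal.ofReal (2 ^ k) := by
      simp only [Real.volume_Icc, Finset.prod_const, Finset.card_univ, Fintype.card_fin]
      rw [show (1 : ℝ) - -1 = 2 by norm_num, ← ENNReal.ofReal_pow (by norm_num)]

lemma exists_wide_pair {d : ℕ} {K : Set (EuclideanSpace ℝ (Fin d))} (hK : IsCompact K)
    (hne : K.Nonempty) {δ : ℝ} {u : EuclideanSpace ℝ (Fin d)}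
    (h : δ ≤ width K u) : ∃ p ∈ K, ∃ q ∈ K, δ ≤ ⟪u, p⟫ - ⟪u, q⟫ := by
  have hc : Continuous fun x : EuclideanSpace ℝ (Fin d) => ⟪u, x⟫ :=
    continuous_const.inner continuous_id
  have himg : IsCompact ((fun x => ⟪u, x⟫) '' K) := hK.image hc
  have hnimg : ((fun x => ⟪u, x⟫) '' K).Nonempty := hne.image _
  obtain ⟨p, hp, hpe⟩ := himg.sSup_mem hnimg
  obtain ⟨q, hq, hqe⟩ := himg.sInf_mem hnimg
  have hpe' : ⟪u, p⟫ = sSup ((fun x => ⟪u, x⟫) '' K) := hpe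
  have hqe' : ⟪u, q⟫ = sInf ((fun x => ⟪u, x⟫) '' K) := hqe
  exact ⟨p, hp, q, hq, by rw [hpe', hqe']; exact h⟩

lemma two_le_pow_succ (n : ℕ) (hn : 1 ≤ n) : 2 * (n:ℝ)^n ≤ ((n:ℝ)+1)^n := by
  have hnp : (0:ℝ) < n := by exact_mod_cast hn
  have hge : (-2:ℝ) ≤ (n:ℝ)⁻¹ := by
    have : (0:ℝ) ≤ (n:ℝ)⁻¹ := by positivity
    linarith
  have h := one_add_mul_le_pow hge n
  have h2 : (n:ℝ) * (n:ℝ)⁻¹ = 1 := by field_simp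
  rw [h2] at h
  norm_num at h
  have h3 : ((1:ℝ) + (n:ℝ)⁻¹)^n * (n:ℝ)^n = ((n:ℝ)+1)^n := by
    rw [← mul_pow]; congr 1; field_simp
  calc 2 * (n:ℝ)^n ≤ ((1:ℝ)+(n:ℝ)⁻¹)^n * (n:ℝ)^n :=
        mul_le_mul_of_nonneg_right h (by positivity)
    _ = ((n:ℝ)+1)^n := h3

lemma factorial_pow_bound : ∀ k : ℕ, 1 ≤ k → (k.factorial : ℝ) * 2 ^ (k - 1) ≤ (k:ℝ) ^ k := by
  intro k hk
  induction k, hk using Nat.le_induction with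
  | base => norm_num
  | succ n hn ih =>
    have h2 := two_le_pow_succ n hn
    have hstep : ((n+1).factorial : ℝ) * 2 ^ (n + 1 - 1)
        = ((n:ℝ)+1) * ((n.factorial : ℝ) * 2 ^ (n-1)) * 2 := by
      rw [Nat.factorial_succ, Nat.add_sub_cancel,
        show n = (n-1)+1 from (Nat.succ_pred_eq_of_pos hn).symm]
      simp only [Nat.add_sub_cancel]
      rw [pow_succ]
      push_cast [Nat.succ_pred_eq_of_pos hn]
      ring
    rw [hstep]
    calc ((n:ℝ)+1) * ((n.factorial : ℝ) * 2 ^ (n-1)) * 2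
        ≤ ((n:ℝ)+1) * (n:ℝ)^n * 2 := by
          apply mul_le_mul_of_nonneg_right _ (by norm_num)
          apply mul_le_mul_of_nonneg_left ih (by positivity)
      _ = ((n:ℝ)+1) * (2 * (n:ℝ)^n) := by ring
      _ ≤ ((n:ℝ)+1) * ((n:ℝ)+1)^n := mul_le_mul_of_nonneg_left h2 (by positivity)
      _ = ((n:ℝ)+1) ^ (n+1) := by rw [pow_succ]; ring
      _ = ((n+1 : ℕ):ℝ) ^ (n+1) := by push_cast; ring

lemma exists_simplex_vectors {k : ℕ} {K : Set (EuclideanSpace ℝ (Fin k))}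
    (hK : IsCompact K) (hne : K.Nonempty) {δ : ℝ} (hδ : 0 < δ)
    (hw : ∀ u : EuclideanSpace ℝ (Fin k), ‖u‖ = 1 → δ ≤ width K u) :
    ∀ n : ℕ, 1 ≤ n → n ≤ k →
    ∃ x0 ∈ K, ∃ v : Fin n → EuclideanSpace ℝ (Fin k),
      (∀ i, x0 + v i ∈ K) ∧
      (∀ i : Fin n, ∃ u : EuclideanSpace ℝ (Fin k), ‖u‖ = 1 ∧
        (∀ j : Fin n, j < i → ⟪u, v j⟫ = 0) ∧
        (if (i : ℕ) = 0 then δ else δ / 2) ≤ |⟪u, v i⟫|) := by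
  classical
  intro n hn
  induction n, hn using Nat.le_induction with
  | base =>
    intro hk
    set u : EuclideanSpace ℝ (Fin k) := EuclideanSpace.single (⟨0, hk⟩ : Fin k) (1:ℝ) with hu
    have hunorm : ‖u‖ = 1 := by rw [hu, EuclideanSpace.norm_single]; norm_num
    obtain ⟨p, hp, q, hq, hpq⟩ := exists_wide_pair hK hne (hw u hunorm)
    refine ⟨q, hq, fun _ => p - q, fun i => by simpa using hp, fun i => ⟨u, hunorm, ?_, ?_⟩⟩
    · intro j hj
      exact absurd (Fin.lt_iff_val_lt_val.mp hj) (by omega)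
    · have : (i : ℕ) = 0 := by omega
      rw [if_pos this, inner_sub_right]
      exact hpq.trans (le_abs_self _)
  | succ n hn1 ih =>
    intro hnk
    obtain ⟨x0, hx0, v, hvK, hvu⟩ := ih (by omega)
    -- find a unit vector orthogonal to all v j
    set W : Submodule ℝ (EuclideanSpace ℝ (Fin k)) := Submodule.span ℝ (Set.range v) with hW
    have hWne : W ≠ ⊤ := by
      intro htop
      have h1 : Module.finrank ℝ W ≤ n := by
        have h2 := finrank_span_le_card (R := ℝ) (Set.range v)
        have h3 : (Set.range v).toFinset.card ≤ n := by
          rw [Set.toFinset_range]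
          exact (Finset.card_image_le).trans (by simp)
        exact h2.trans h3
      rw [htop] at h1
      have h4 : Module.finrank ℝ (⊤ : Submodule ℝ (EuclideanSpace ℝ (Fin k)))
          = k := by rw [finrank_top]; exact finrank_euclideanSpace_fin
      omega
    have hWbot : Wᗮ ≠ ⊥ := fun h => hWne (Submodule.orthogonal_eq_bot_iff.mp h)
    obtain ⟨u', hu'W, hu'0⟩ := (Submodule.ne_bot_iff _).mp hWbot
    set u0 : EuclideanSpace ℝ (Fin k) := (‖u'‖ : ℝ)⁻¹ • u' with hu0
    have hu0norm : ‖u0‖ = 1 := norm_smul_inv_norm hu'0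
    have hu0W : u0 ∈ Wᗮ := Submodule.smul_mem _ _ hu'W
    have hu0orth : ∀ j : Fin n, ⟪u0, v j⟫ = 0 := by
      intro j
      rw [real_inner_comm]
      exact (Submodule.mem_orthogonal W u0).mp hu0W (v j)
        (Submodule.subset_span (Set.mem_range_self j))
    obtain ⟨p, hp, q, hq, hpq⟩ := exists_wide_pair hK hne (hw u0 hu0norm)
    have hab : δ ≤ ⟪u0, p - x0⟫ - ⟪u0, q - x0⟫ := by
      have e1 : ⟪u0, p - x0⟫ = ⟪u0, p⟫ - ⟪u0, x0⟫ := inner_sub_right _ _ _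
      have e2 : ⟪u0, q - x0⟫ = ⟪u0, q⟫ - ⟪u0, x0⟫ := inner_sub_right _ _ _
      rw [e1, e2]; linarith
    have hkey : ∃ w : EuclideanSpace ℝ (Fin k), (x0 + w ∈ K) ∧ δ/2 ≤ |⟪u0, w⟫| := by
      rcases le_or_gt (δ/2) |⟪u0, p - x0⟫| with h | h
      · exact ⟨p - x0, by simpa using hp, h⟩
      · refine ⟨q - x0, by simpa using hq, ?_⟩
        have h1 : ⟪u0, p - x0⟫ < δ/2 := (le_abs_self _).trans_lt h
        have h2 : ⟪u0, q - x0⟫ ≤ ⟪u0, p - x0⟫ - δ := by linarith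
        have h3 : ⟪u0, q - x0⟫ < -(δ/2) := by linarith
        calc δ/2 ≤ -⟪u0, q - x0⟫ := by linarith
          _ ≤ |⟪u0, q - x0⟫| := neg_le_abs _
    obtain ⟨w, hwK, hwb⟩ := hkey
    refine ⟨x0, hx0, Fin.snoc v w, ?_, ?_⟩
    · intro i
      refine Fin.lastCases ?_ ?_ i
      · rw [Fin.snoc_last]; exact hwK
      · intro j; rw [Fin.snoc_castSucc]; exact hvK j
    · intro i
      refine Fin.lastCases ?_ ?_ i
      · refine ⟨u0, hu0norm, ?_, ?_⟩
        · intro j hj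
          obtain ⟨j', rfl⟩ := Fin.exists_castSucc_eq.mpr (Fin.ne_last_of_lt hj)
          rw [Fin.snoc_castSucc]
          exact hu0orth j'
        · have : ((Fin.last n : Fin (n+1)) : ℕ) = n := rfl
          rw [this, if_neg (by omega), Fin.snoc_last]
          exact hwb
      · intro i0
        obtain ⟨u, hun, horth, hbd⟩ := hvu i0
        refine ⟨u, hun, ?_, ?_⟩
        · intro j hj
          obtain ⟨j', rfl⟩ := Fin.exists_castSucc_eq.mpr
            (Fin.ne_last_of_lt (hj.trans_le (Fin.le_last _)))
          rw [Fin.snoc_castSucc]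
          exact horth j' (Fin.castSucc_lt_castSucc_iff.mp hj)
        · rw [Fin.snoc_castSucc]
          simpa using hbd

lemma real_compare (k : ℕ) (hk : 1 ≤ k) (δ : ℝ) (hδ : 0 < δ) :
    2 ^ k * (δ / (2 * k)) ^ k ≤ δ * (δ / 2) ^ (k - 1) / k.factorial := by
  have hkR : (0:ℝ) < k := by exact_mod_cast hk
  have e1 : 2 ^ k * (δ / (2 * (k:ℝ))) ^ k = δ ^ k / (k:ℝ) ^ k := by
    rw [div_pow, mul_pow]
    field_simp
  have e2 : δ * (δ / 2) ^ (k - 1) = δ ^ k / 2 ^ (k - 1) := by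
    rw [div_pow, ← mul_div_assoc]
    congr 1
    rw [← pow_succ']
    congr 1
    omega
  rw [e1, e2, div_div]
  apply div_le_div_of_nonneg_left (by positivity) (by positivity)
  calc (2:ℝ) ^ (k-1) * k.factorial = (k.factorial : ℝ) * 2 ^ (k-1) := by ring
    _ ≤ (k:ℝ) ^ k := factorial_pow_bound k hk

/-- If every directional width of a convex body `K ⊆ ℝ^k` is at least `δ > 0`, then
`vol(K) ≥ γ_k · (δ/(2k))^k`, where `γ_k` is the volume of the `k`-dimensional unit
ball. -/
theorem volume_lower_bound_of_width {k : ℕ} (K : Set (EuclideanSpace ℝ (Fin k)))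
    (hKcompact : IsCompact K) (hKconv : Convex ℝ K) (hKint : (interior K).Nonempty)
    (δ : ℝ) (hδ : 0 < δ)
    (hw : ∀ u : EuclideanSpace ℝ (Fin k), ‖u‖ = 1 → δ ≤ width K u) :
    volume (Metric.closedBall (0 : EuclideanSpace ℝ (Fin k)) 1) *
        ENNReal.ofReal ((δ / (2 * k)) ^ k) ≤ volume K := by
  classical
  have hne : K.Nonempty := hKint.mono interior_subset
  rcases Nat.eq_zero_or_pos k with hk0 | hk1
  · subst hk0
    have hKuniv : K = univ := hne.eq_univ
    have hball : Metric.closedBall (0 : EuclideanSpace ℝ (Fin 0)) 1 = univ := by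
      ext x; simp [Subsingleton.elim x 0]
    have hvol : volume (univ : Set (EuclideanSpace ℝ (Fin 0))) = 1 := by
      have := (EuclideanSpace.volume_preserving_symm_measurableEquiv_toLp (Fin 0)).measure_preimage
        (MeasurableSet.univ (α := Fin 0 → ℝ)).nullMeasurableSet
      simpa [MeasureTheory.volume_pi, Measure.pi_univ] using this
    rw [hKuniv, hball, hvol]
    simp
  -- main case
  have hcard : Module.finrank ℝ (EuclideanSpace ℝ (Fin k)) = Fintype.card (Fin k) := by
    simp [finrank_euclideanSpace_fin]
  obtain ⟨x0, hx0, v, hvK, hvu⟩ :=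
    exists_simplex_vectors hKcompact hne hδ hw k hk1 le_rfl
  haveI hwf : WellFoundedLT (Fin k) := inferInstance
  set B : OrthonormalBasis (Fin k) ℝ (EuclideanSpace ℝ (Fin k)) :=
    @gramSchmidtOrthonormalBasis ℝ _ inferInstance inferInstance inferInstance (Fin k)
      inferInstance inferInstance (inferInstanceAs (WellFoundedLT (Fin k))) inferInstance
      inferInstance hcard v with hB
  set g : Fin k → EuclideanSpace ℝ (Fin k) := gramSchmidt ℝ v with hg
  set c : Fin k → ℝ := fun i => if (i : ℕ) = 0 then δ else δ / 2 with hc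
  have hcpos : ∀ i, 0 < c i := by
    intro i; rw [hc]; dsimp only; split <;> [exact hδ; linarith]
  -- key pointwise facts
  have hkey : ∀ i : Fin k, ⟪B i, v i⟫ = ‖g i‖ ∧ c i ≤ ‖g i‖ := by
    intro i
    obtain ⟨u, hun, huorth, hubd⟩ := hvu i
    -- u and B i both orthogonal to span of earlier v's
    have hspan_u : ∀ x ∈ Submodule.span ℝ (v '' Set.Iio i), ⟪u, x⟫ = 0 := by
      intro x hx
      induction hx using Submodule.span_induction with
      | mem y hy => obtain ⟨j, hj, rfl⟩ := hy; exact huorth j hj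
      | zero => exact inner_zero_right _
      | add y z _ _ hy hz => rw [inner_add_right, hy, hz, add_zero]
      | smul a y _ hy => rw [real_inner_smul_right, hy, mul_zero]
    have hspan_B : ∀ x ∈ Submodule.span ℝ (v '' Set.Iio i), ⟪B i, x⟫ = 0 := by
      intro x hx
      induction hx using Submodule.span_induction with
      | mem y hy =>
        obtain ⟨j, hj, rfl⟩ := hy
        exact gramSchmidtOrthonormalBasis_inv_triangular hcard v hj
      | zero => exact inner_zero_right _
      | add y z _ _ hy hz => rw [inner_add_right, hy, hz, add_zero]
      | smul a y _ hy => rw [real_inner_smul_right, hy, mul_zero]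
    have hdiff : v i - g i ∈ Submodule.span ℝ (v '' Set.Iio i) := by
      have hgi := gramSchmidt_def ℝ v i
      have : v i - g i = ∑ j ∈ Finset.Iio i,
          ((Submodule.span ℝ {gramSchmidt ℝ v j}).starProjection (v i) :
            EuclideanSpace ℝ (Fin k)) := by
        rw [hg, hgi]; abel
      rw [this]
      apply Submodule.sum_mem
      intro j hj
      have hjlt : j < i := Finset.mem_Iio.mp hj
      have h1 : ((Submodule.span ℝ {gramSchmidt ℝ v j}).starProjection (v i) :
          EuclideanSpace ℝ (Fin k)) ∈ Submodule.span ℝ {gramSchmidt ℝ v j} :=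
        Submodule.starProjection_apply_mem _ _
      have h2 : Submodule.span ℝ {gramSchmidt ℝ v j} ≤ Submodule.span ℝ (v '' Set.Iio i) := by
        rw [Submodule.span_le, Set.singleton_subset_iff]
        have h3 := gramSchmidt_mem_span ℝ v (le_refl j)
        have h4 : Submodule.span ℝ (v '' Set.Iic j) ≤ Submodule.span ℝ (v '' Set.Iio i) :=
          Submodule.span_mono (Set.image_mono fun a ha => lt_of_le_of_lt ha hjlt)
        exact h4 h3
      exact h2 h1
    have hu_eq : ⟪u, g i⟫ = ⟪u, v i⟫ := by
      have := hspan_u _ hdiff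
      rw [inner_sub_right] at this
      linarith
    have hB_eq : ⟪B i, g i⟫ = ⟪B i, v i⟫ := by
      have := hspan_B _ hdiff
      rw [inner_sub_right] at this
      linarith
    have hgle : c i ≤ ‖g i‖ := by
      have h1 : c i ≤ |⟪u, v i⟫| := hubd
      rw [← hu_eq] at h1
      calc c i ≤ |⟪u, g i⟫| := h1
        _ ≤ ‖u‖ * ‖g i‖ := abs_real_inner_le_norm _ _
        _ = ‖g i‖ := by rw [hun, one_mul]
    have hg0 : g i ≠ 0 := by
      intro h0
      rw [h0, norm_zero] at hgle
      exact absurd hgle (not_le.mpr (hcpos i))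
    have hgn0 : gramSchmidtNormed ℝ v i ≠ 0 := by
      rw [gramSchmidtNormed]
      exact smul_ne_zero (by exact_mod_cast inv_ne_zero (norm_ne_zero_iff.mpr hg0)) hg0
    have hBi : B i = (‖g i‖:ℝ)⁻¹ • g i := by
      rw [hB, gramSchmidtOrthonormalBasis_apply hcard hgn0, gramSchmidtNormed]
      norm_num
      rfl
    have hBval : ⟪B i, v i⟫ = ‖g i‖ := by
      rw [← hB_eq, hBi, real_inner_smul_left, real_inner_self_eq_norm_sq]
      field_simp [norm_ne_zero_iff.mpr hg0]
    exact ⟨hBval, hgle⟩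
  -- determinant bound
  set T : EuclideanSpace ℝ (Fin k) →ₗ[ℝ] EuclideanSpace ℝ (Fin k) := B.toBasis.constr ℝ v with hT
  have hTmat : LinearMap.toMatrix B.toBasis B.toBasis T = B.toBasis.toMatrix v := by
    ext i j
    rw [LinearMap.toMatrix_apply, hT, Module.Basis.constr_basis, Module.Basis.toMatrix_apply]
  have hTdet : LinearMap.det T = ∏ i, ⟪B i, v i⟫ := by
    rw [← LinearMap.det_toMatrix B.toBasis, hTmat, ← Module.Basis.det_apply,
      gramSchmidtOrthonormalBasis_det hcard]
  have hprod_eq : ∏ i, ⟪B i, v i⟫ = ∏ i, ‖g i‖ :=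
    Finset.prod_congr rfl fun i _ => (hkey i).1
  have hdetlb : δ * (δ/2) ^ (k-1) ≤ |LinearMap.det T| := by
    rw [hTdet, hprod_eq, abs_of_nonneg (Finset.prod_nonneg fun i _ => norm_nonneg _)]
    have h1 : ∏ i, c i ≤ ∏ i, ‖g i‖ :=
      Finset.prod_le_prod (fun i _ => (hcpos i).le) (fun i _ => (hkey i).2)
    refine le_trans (le_of_eq ?_) h1
    obtain ⟨m, rfl⟩ : ∃ m, k = m + 1 := ⟨k - 1, by omega⟩
    rw [Fin.prod_univ_succ]
    have hc0 : c 0 = δ := by rw [hc]; norm_num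
    have hcs : ∀ i : Fin m, c i.succ = δ / 2 := by
      intro i; rw [hc]; simp [Fin.val_succ]
    rw [hc0]
    congr 1
    rw [Finset.prod_congr rfl fun i _ => hcs i, Finset.prod_const, Finset.card_univ,
      Fintype.card_fin]
    simp
  -- the simplex inside K
  set Δ : Set (EuclideanSpace ℝ (Fin k)) := {w | (∀ i, 0 ≤ w i) ∧ ∑ i, w i ≤ 1} with hΔ
  have hΔmeas : MeasurableSet Δ :=
    ((MeasurableEquiv.toLp 2 (Fin k → ℝ)).symm).measurable (meas_simplex_set k 1)
  have hΔvol : volume Δ = ENNReal.ofReal (1 / k.factorial) := vol_euc_simplex k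
  set Δ' : Set (EuclideanSpace ℝ (Fin k)) := ⇑B.repr ⁻¹' Δ with hΔ'
  have hΔ'vol : volume Δ' = ENNReal.ofReal (1 / k.factorial) := by
    rw [hΔ', (B.repr.measurePreserving).measure_preimage hΔmeas.nullMeasurableSet, hΔvol]
  have hsub : (fun y => x0 + y) '' (⇑T '' Δ') ⊆ K := by
    rintro - ⟨-, ⟨w, hw', rfl⟩, rfl⟩
    show x0 + T w ∈ K
    have hcoords : (∀ i, 0 ≤ B.repr w i) ∧ ∑ i, B.repr w i ≤ 1 := hw'
    have hTw : T w = ∑ i, B.repr w i • v i := by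
      rw [hT, Module.Basis.constr_apply_fintype]
      simp only [Module.Basis.equivFun_apply, OrthonormalBasis.coe_toBasis_repr_apply]
    set cc : Fin k → ℝ := fun i => B.repr w i with hcc
    have hsum : x0 + T w = (1 - ∑ i, cc i) • x0 + ∑ i, cc i • (x0 + v i) := by
      rw [hTw]
      have : ∑ i, cc i • (x0 + v i) = (∑ i, cc i) • x0 + ∑ i, cc i • v i := by
        simp_rw [smul_add]
        rw [Finset.sum_add_distrib, ← Finset.sum_smul]
      rw [this, sub_smul, one_smul]
      abel
    rw [show x0 + T w = (1 - ∑ i, cc i) • x0 + ∑ i, cc i • (x0 + v i) from hsum]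
    have := hKconv.sum_mem (t := Finset.univ) (w := fun i : Fin (k+1) =>
      Fin.cons (1 - ∑ i, cc i) cc i) (z := fun i : Fin (k+1) =>
      Fin.cons x0 (fun j => x0 + v j) i) ?_ ?_ ?_
    · rw [Fin.sum_univ_succ] at this
      simpa using this
    · intro i _
      refine Fin.cases ?_ ?_ i
      · simp only [Fin.cons_zero]
        have := hcoords.2
        linarith
      · intro j
        simp only [Fin.cons_succ]
        exact hcoords.1 j
    · rw [Fin.sum_univ_succ]
      simp
    · intro i _
      refine Fin.cases ?_ ?_ i
      · simpa using hx0
      · intro j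
        simpa using hvK j
  -- measure computation
  have hchain : ENNReal.ofReal (δ * (δ/2) ^ (k-1)) * ENNReal.ofReal (1 / k.factorial)
      ≤ volume K := by
    calc ENNReal.ofReal (δ * (δ/2) ^ (k-1)) * ENNReal.ofReal (1 / k.factorial)
        ≤ ENNReal.ofReal |LinearMap.det T| * ENNReal.ofReal (1 / k.factorial) := by
          apply mul_le_mul_left
          exact ENNReal.ofReal_le_ofReal hdetlb
      _ = ENNReal.ofReal |LinearMap.det T| * volume Δ' := by rw [hΔ'vol]
      _ = volume (⇑T '' Δ') := (Measure.addHaar_image_linearMap volume T Δ').symm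
      _ = volume ((fun y => x0 + y) '' (⇑T '' Δ')) := by
          rw [show (fun y => x0 + y) '' (⇑T '' Δ') = x0 +ᵥ (⇑T '' Δ') from rfl,
            measure_vadd volume x0 (⇑T '' Δ')]
      _ ≤ volume K := measure_mono hsub
  -- final comparison
  calc volume (Metric.closedBall (0 : EuclideanSpace ℝ (Fin k)) 1) *
        ENNReal.ofReal ((δ / (2 * k)) ^ k)
      ≤ ENNReal.ofReal (2 ^ k) * ENNReal.ofReal ((δ / (2 * k)) ^ k) :=
        mul_le_mul_left (vol_ball_le k) _
    _ = ENNReal.ofReal (2 ^ k * (δ / (2 * k)) ^ k) := by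
        rw [ENNReal.ofReal_mul (by positivity)]
    _ ≤ ENNReal.ofReal (δ * (δ/2) ^ (k-1) / k.factorial) :=
        ENNReal.ofReal_le_ofReal (real_compare k hk1 δ hδ)
    _ = ENNReal.ofReal (δ * (δ/2) ^ (k-1)) * ENNReal.ofReal (1 / k.factorial) := by
        rw [← ENNReal.ofReal_mul (by positivity)]
        congr 1
        field_simp
    _ ≤ volume K := hchain
end

section
/- Let K be a convex body in ℝ^d with centroid z, and let z′ be a point with ‖z − z′‖ ≤ ρ. Then for every unit vector u, the set K₊ = K ∩ {x : u⊤(x − z′) ≥ 0} satisfies, for every unit vector v, (1/(d+1))·w(K, v) − ρ·max(1, w(K, v)/w(K, u)) ≤ w(K₊, v) ≤ w(K, v). -/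
open MeasureTheory Set RealInnerProductSpace

lemma inner_homothety {d : ℕ} {u : EuclideanSpace ℝ (Fin d)}
    (p x : EuclideanSpace ℝ (Fin d)) (l : ℝ) :
    ⟪u, AffineMap.homothety p l x⟫ = l * ⟪u, x⟫ + (1 - l) * ⟪u, p⟫ := by
  rw [AffineMap.homothety_apply, vadd_eq_add, vsub_eq_sub, inner_add_right,
    real_inner_smul_right, inner_sub_right]
  ring

lemma homothety_mem_of_convex {d : ℕ} {K : Set (EuclideanSpace ℝ (Fin d))}
    (hconv : Convex ℝ K) {p x : EuclideanSpace ℝ (Fin d)}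
    (hp : p ∈ K) (hx : x ∈ K) {l : ℝ} (h0 : 0 ≤ l) (h1 : l ≤ 1) :
    AffineMap.homothety p l x ∈ K := by
  have : AffineMap.homothety p l x = l • x + (1 - l) • p := by
    simp [AffineMap.homothety_apply, vsub_eq_sub, vadd_eq_add, smul_sub]
    module
  rw [this]
  exact hconv hx hp h0 (by linarith) (by ring)

lemma centroid_inner_le {d : ℕ} {K : Set (EuclideanSpace ℝ (Fin d))}
    (hKc : IsCompact K) (hconv : Convex ℝ K) (hKint : (interior K).Nonempty)
    (u : EuclideanSpace ℝ (Fin d))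
    (hw : 0 < sSup ((fun x => ⟪u, x⟫) '' K) - sInf ((fun x => ⟪u, x⟫) '' K)) :
    ⟪u, centroid K⟫ ≤ sSup ((fun x => ⟪u, x⟫) '' K) -
      (sSup ((fun x => ⟪u, x⟫) '' K) - sInf ((fun x => ⟪u, x⟫) '' K)) / (d + 1) := by
  have hne : K.Nonempty := hKint.mono interior_subset
  set f : EuclideanSpace ℝ (Fin d) → ℝ := fun x => ⟪u, x⟫ with hf
  have hcont : Continuous f := continuous_const.inner continuous_id
  set a : ℝ := sInf (f '' K) with ha_def
  set b : ℝ := sSup (f '' K) with hb_def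
  set w : ℝ := b - a with hw_def
  have hbdd : BddAbove (f '' K) := (hKc.image hcont).bddAbove
  have hbdd' : BddBelow (f '' K) := (hKc.image hcont).bddBelow
  have ha : ∀ x ∈ K, a ≤ f x := fun x hx => csInf_le hbdd' ⟨x, hx, rfl⟩
  have hb : ∀ x ∈ K, f x ≤ b := fun x hx => le_csSup hbdd ⟨x, hx, rfl⟩
  obtain ⟨q, hqK, hq⟩ := hKc.exists_isMinOn hne hcont.continuousOn
  have hqa : f q = a := by
    refine le_antisymm (le_csInf (hne.image f) ?_) (ha q hqK)
    rintro y ⟨x, hx, rfl⟩; exact hq hx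
  have hKm : MeasurableSet K := hKc.measurableSet
  have hfin : volume K ≠ ⊤ := hKc.measure_lt_top.ne
  set M : ℝ := (volume K).toReal with hM_def
  have hMpos : 0 < M := by
    obtain ⟨x₀, hx₀⟩ := hKint
    have h1 : (0 : ENNReal) < volume (interior K) :=
      isOpen_interior.measure_pos volume ⟨x₀, hx₀⟩
    have h2 : volume (interior K) ≤ volume K := measure_mono interior_subset
    exact ENNReal.toReal_pos (h1.trans_le h2).ne' hfin
  -- the measure estimate
  have claim : ∀ t ∈ Ioc (0:ℝ) w,
      (volume (K ∩ {x | t < f x - a})).toReal ≤ M - (t/w)^d * M := by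
    rintro t ⟨ht0, htw⟩
    set l : ℝ := t / w with hl_def
    have hl0 : 0 < l := div_pos ht0 hw
    have hl1 : l ≤ 1 := (div_le_one hw).2 htw
    have hlw : l * w = t := div_mul_cancel₀ t hw.ne'
    set S := AffineMap.homothety q l '' K with hS_def
    have hSsub : S ⊆ K ∩ {x | f x ≤ a + t} := by
      rintro _ ⟨x, hx, rfl⟩
      refine ⟨homothety_mem_of_convex hconv hqK hx hl0.le hl1, ?_⟩
      have hfx := hb x hx
      have key : f (AffineMap.homothety q l x) = l * f x + (1 - l) * f q :=
        inner_homothety q x l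
      have h1 : l * f x ≤ l * b := mul_le_mul_of_nonneg_left hfx hl0.le
      simp only [mem_setOf_eq, key, hqa]
      have : l * b + (1 - l) * a = a + l * w := by rw [hw_def]; ring
      linarith
    have hSvol : (volume S).toReal = l ^ d * M := by
      rw [hS_def, Measure.addHaar_image_homothety, abs_of_nonneg (pow_nonneg hl0.le _),
        ENNReal.toReal_mul, ENNReal.toReal_ofReal (pow_nonneg hl0.le _),
        finrank_euclideanSpace_fin]
    have hmeasB : MeasurableSet (K ∩ {x | f x ≤ a + t}) :=
      hKm.inter (measurableSet_le hcont.measurable measurable_const)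
    have hdisj : Disjoint (K ∩ {x | t < f x - a}) (K ∩ {x | f x ≤ a + t}) := by
      rw [Set.disjoint_left]
      rintro x ⟨_, hx1⟩ ⟨_, hx2⟩
      simp only [mem_setOf_eq] at hx1 hx2
      linarith
    have hAB : volume (K ∩ {x | t < f x - a}) + volume S ≤ volume K := by
      calc volume (K ∩ {x | t < f x - a}) + volume S
          ≤ volume (K ∩ {x | t < f x - a}) + volume (K ∩ {x | f x ≤ a + t}) :=
            add_le_add le_rfl (measure_mono hSsub)
        _ = volume ((K ∩ {x | t < f x - a}) ∪ (K ∩ {x | f x ≤ a + t})) :=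
            (measure_union hdisj hmeasB).symm
        _ ≤ volume K := measure_mono (union_subset inter_subset_left inter_subset_left)
    have hfinA : volume (K ∩ {x | t < f x - a}) ≠ ⊤ :=
      ((measure_mono inter_subset_left).trans_lt hKc.measure_lt_top).ne
    have hfinS : volume S ≠ ⊤ :=
      ((measure_mono (hSsub.trans inter_subset_left)).trans_lt hKc.measure_lt_top).ne
    have := ENNReal.toReal_mono hfin hAB
    rw [ENNReal.toReal_add hfinA hfinS, hSvol] at this
    linarith
  -- layer cake
  have hIntf : IntegrableOn (fun x => f x - a) K volume :=
    ((hcont.sub continuous_const).continuousOn).integrableOn_compact hKc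
  have hnn : 0 ≤ᵐ[volume.restrict K] fun x => f x - a := by
    filter_upwards [ae_restrict_mem hKm] with x hx
    simpa using sub_nonneg.2 (ha x hx)
  have hmeas_t : ∀ t : ℝ, MeasurableSet {x | t < f x - a} := fun t =>
    measurableSet_lt measurable_const (hcont.measurable.sub measurable_const)
  set g : ℝ → ℝ := fun t => (volume (K ∩ {x | t < f x - a})).toReal with hg_def
  have hL : ∫ x in K, (f x - a) = ∫ t in Ioi (0:ℝ), g t := by
    rw [hIntf.integral_eq_integral_meas_lt hnn]
    refine integral_congr_ae (ae_of_all _ fun t => ?_)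
    show ((volume.restrict K) {x | t < f x - a}).toReal = g t
    rw [Measure.restrict_apply (hmeas_t t), inter_comm]
  have hfinA : ∀ t : ℝ, volume (K ∩ {x | t < f x - a}) ≠ ⊤ := fun t =>
    ((measure_mono inter_subset_left).trans_lt hKc.measure_lt_top).ne
  have hgant : Antitone g := by
    intro t₁ t₂ h
    exact ENNReal.toReal_mono (hfinA t₁)
      (measure_mono (inter_subset_inter_right _ fun x hx => lt_of_le_of_lt h hx))
  have hg0 : ∀ t, 0 ≤ g t := fun t => ENNReal.toReal_nonneg
  have hgM : ∀ t, g t ≤ M := fun t =>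
    ENNReal.toReal_mono hfin (measure_mono inter_subset_left)
  have hIoi : ∫ t in Ioi (0:ℝ), g t = ∫ t in Ioc (0:ℝ) w, g t := by
    refine setIntegral_eq_of_subset_of_ae_diff_eq_zero nullMeasurableSet_Ioi
      Ioc_subset_Ioi_self (ae_of_all _ fun t ht => ?_)
    have htw : w < t := by
      rcases ht with ⟨ht1, ht2⟩
      simp only [mem_Ioc, not_and, not_le, mem_Ioi] at ht1 ht2 ⊢
      exact ht2 ht1
    have : K ∩ {x | t < f x - a} = ∅ := by
      ext x
      simp only [mem_inter_iff, mem_setOf_eq, mem_empty_iff_false, iff_false, not_and]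
      intro hx
      have := hb x hx
      intro hlt
      have : f x - a ≤ w := by rw [hw_def]; linarith
      linarith
    simp [hg_def, this]
  have hgInt : IntegrableOn g (Ioc (0:ℝ) w) volume :=
    Measure.integrableOn_of_bounded measure_Ioc_lt_top.ne
      hgant.measurable.aestronglyMeasurable
      (ae_of_all _ fun t => by
        rw [Real.norm_eq_abs, abs_of_nonneg (hg0 t)]; exact hgM t)
  have hhInt : IntegrableOn (fun t : ℝ => M - (t/w)^d * M) (Ioc (0:ℝ) w) volume :=
    (continuous_const.sub (((continuous_id.div_const w).pow d).mul continuous_const)).integrableOn_Ioc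
  have hmono : ∫ t in Ioc (0:ℝ) w, g t ≤ ∫ t in Ioc (0:ℝ) w, (M - (t/w)^d * M) :=
    setIntegral_mono_on hgInt hhInt measurableSet_Ioc claim
  have hcomp : ∫ t in Ioc (0:ℝ) w, (M - (t/w)^d * M) = M * w - M * w / (d + 1) := by
    rw [← intervalIntegral.integral_of_le hw.le]
    have h1 : ∀ t : ℝ, M - (t/w)^d * M = M - (M / w^d) * t^d := by
      intro t; rw [div_pow]; ring
    simp_rw [h1]
    rw [intervalIntegral.integral_sub intervalIntegrable_const
      ((intervalIntegral.intervalIntegrable_pow d).const_mul _),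
      intervalIntegral.integral_const_mul, integral_pow, intervalIntegral.integral_const]
    have hd1 : (d : ℝ) + 1 ≠ 0 := by positivity
    have hwne : w ≠ 0 := hw.ne'
    field_simp
    ring
  have hstep : ∫ x in K, (f x - a) ≤ M * w - M * w / (d + 1) := by
    rw [hL, hIoi]; linarith
  -- from integral bound to centroid bound
  have hIntf2 : IntegrableOn f K volume := hcont.continuousOn.integrableOn_compact hKc
  have hconst : IntegrableOn (fun _ : EuclideanSpace ℝ (Fin d) => a) K volume :=
    integrableOn_const hKc.measure_lt_top.ne
  have hsplit : ∫ x in K, (f x - a) = (∫ x in K, f x) - a * M := by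
    rw [integral_sub hIntf2 hconst, setIntegral_const, smul_eq_mul]; simp only [Measure.real, hM_def]; ring
  have hintf_le : ∫ x in K, f x ≤ a * M + M * w - M * w / (d + 1) := by linarith
  have hcen : ⟪u, centroid K⟫ = M⁻¹ * ∫ x in K, f x := by
    have hIdInt : Integrable (fun x : EuclideanSpace ℝ (Fin d) => x) (volume.restrict K) :=
      continuousOn_id.integrableOn_compact hKc
    rw [centroid, real_inner_smul_right, ← integral_inner hIdInt u]
  rw [hcen]
  rw [inv_mul_le_iff₀ hMpos]
  calc ∫ x in K, f x ≤ a * M + M * w - M * w / (d + 1) := hintf_le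
    _ = M * (b - w / (d + 1)) := by rw [hw_def]; ring

section lemmas
variable {d : ℕ} {K : Set (EuclideanSpace ℝ (Fin d))} {u v : EuclideanSpace ℝ (Fin d)}

lemma width_mono {S : Set (EuclideanSpace ℝ (Fin d))} (hST : S ⊆ K) (hS : S.Nonempty)
    (hb : BddAbove ((fun x => ⟪v, x⟫) '' K)) (hb' : BddBelow ((fun x => ⟪v, x⟫) '' K)) :
    width S v ≤ width K v := by
  have him : (fun x => ⟪v, x⟫) '' S ⊆ (fun x => ⟪v, x⟫) '' K := image_mono hST
  exact sub_le_sub (csSup_le_csSup hb (hS.image _) him)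
    (csInf_le_csInf hb' (hS.image _) him)

lemma width_pos (hKc : IsCompact K) (hKint : (interior K).Nonempty) (hu : ‖u‖ = 1) :
    0 < width K u := by
  obtain ⟨x₀, hx₀⟩ := hKint
  obtain ⟨ε, hε, hball⟩ := Metric.mem_nhds_iff.1 (mem_interior_iff_mem_nhds.1 hx₀)
  have hcont : Continuous fun x : EuclideanSpace ℝ (Fin d) => ⟪u, x⟫ :=
    continuous_const.inner continuous_id
  have hbdd := (hKc.image hcont).bddAbove
  have hbdd' := (hKc.image hcont).bddBelow
  have hmem : ∀ t : ℝ, |t| < ε → x₀ + t • u ∈ K := by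
    intro t ht
    apply hball
    simp [Metric.mem_ball, dist_eq_norm, norm_smul, hu, ht]
  have h1 : x₀ + (ε/2) • u ∈ K := hmem _ (by rw [abs_of_nonneg (by linarith)]; linarith)
  have h2 : x₀ + (-(ε/2)) • u ∈ K := hmem _ (by rw [abs_of_nonpos (by linarith)]; linarith)
  have hs1 : ⟪u, x₀ + (ε/2) • u⟫ ≤ sSup ((fun x => ⟪u, x⟫) '' K) :=
    le_csSup hbdd ⟨_, h1, rfl⟩
  have hs2 : sInf ((fun x => ⟪u, x⟫) '' K) ≤ ⟪u, x₀ + (-(ε/2)) • u⟫ :=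
    csInf_le hbdd' ⟨_, h2, rfl⟩
  have hnorm : ⟪u, u⟫ = 1 := by
    rw [real_inner_self_eq_norm_sq, hu]; norm_num
  have e1 : ⟪u, x₀ + (ε/2) • u⟫ = ⟪u, x₀⟫ + ε/2 := by
    rw [inner_add_right, real_inner_smul_right, hnorm]; ring
  have e2 : ⟪u, x₀ + (-(ε/2)) • u⟫ = ⟪u, x₀⟫ - ε/2 := by
    rw [inner_add_right, real_inner_smul_right, hnorm]; ring
  rw [e1] at hs1; rw [e2] at hs2
  unfold width; linarith

end lemmas

/-- Approximate directional Grünbaum theorem: cutting a convex body through an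
approximate centroid `z'` with `‖z - z'‖ ≤ ρ` keeps at least a
`1/(d+1)` fraction of every directional width, up to an error term in `ρ`. -/
theorem approx_directional_grunbaum {d : ℕ} (K : Set (EuclideanSpace ℝ (Fin d)))
    (hKcompact : IsCompact K) (hKconv : Convex ℝ K) (hKint : (interior K).Nonempty)
    (ρ : ℝ) (z' : EuclideanSpace ℝ (Fin d)) (hz' : ‖centroid K - z'‖ ≤ ρ)
    (u : EuclideanSpace ℝ (Fin d)) (hu : ‖u‖ = 1)
    (v : EuclideanSpace ℝ (Fin d)) (hv : ‖v‖ = 1) :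
    (1 / (d + 1 : ℝ)) * width K v - ρ * max 1 (width K v / width K u) ≤
        width (K ∩ {x | 0 ≤ ⟪u, x - z'⟫}) v ∧
      width (K ∩ {x | 0 ≤ ⟪u, x - z'⟫}) v ≤ width K v := by
  have hne : K.Nonempty := hKint.mono interior_subset
  have hcv : Continuous fun x : EuclideanSpace ℝ (Fin d) => ⟪v, x⟫ :=
    continuous_const.inner continuous_id
  have hcu : Continuous fun x : EuclideanSpace ℝ (Fin d) => ⟪u, x⟫ :=
    continuous_const.inner continuous_id
  have hbv : BddAbove ((fun x => ⟪v, x⟫) '' K) := (hKcompact.image hcv).bddAbove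
  have hbv' : BddBelow ((fun x => ⟪v, x⟫) '' K) := (hKcompact.image hcv).bddBelow
  have hbu : BddAbove ((fun x => ⟪u, x⟫) '' K) := (hKcompact.image hcu).bddAbove
  have hbu' : BddBelow ((fun x => ⟪u, x⟫) '' K) := (hKcompact.image hcu).bddBelow
  set Kp := K ∩ {x | 0 ≤ ⟪u, x - z'⟫} with hKp_def
  have hKpK : Kp ⊆ K := inter_subset_left
  have hwv : 0 < width K v := width_pos hKcompact hKint hv
  have hwu : 0 < width K u := width_pos hKcompact hKint hu
  have hρ : 0 ≤ ρ := le_trans (norm_nonneg _) hz'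
  have hKpbA : BddAbove ((fun x => ⟪v, x⟫) '' Kp) := hbv.mono (image_mono hKpK)
  have hKpbB : BddBelow ((fun x => ⟪v, x⟫) '' Kp) := hbv'.mono (image_mono hKpK)
  have hwidth_empty : width (∅ : Set (EuclideanSpace ℝ (Fin d))) v = 0 := by
    unfold width; simp
  have hupper : width Kp v ≤ width K v := by
    rcases Kp.eq_empty_or_nonempty with h | h
    · rw [h, hwidth_empty]
      exact sub_nonneg.2 (csInf_le_csSup (hne.image _) hbv' hbv)
    · exact width_mono hKpK h hbv hbv'
  have hKp_nonneg : 0 ≤ width Kp v := by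
    rcases Kp.eq_empty_or_nonempty with h | h
    · rw [h, hwidth_empty]
    · exact sub_nonneg.2 (csInf_le_csSup (h.image _) hKpbB hKpbA)
  set a : ℝ := sInf ((fun x => ⟪u, x⟫) '' K) with ha_def
  set b : ℝ := sSup ((fun x => ⟪u, x⟫) '' K) with hb_def
  have hwu_eq : width K u = b - a := rfl
  set s : ℝ := ⟪u, z'⟫ with hs_def
  have hcen : ⟪u, centroid K⟫ ≤ b - (b - a) / (d + 1) :=
    centroid_inner_le hKcompact hKconv hKint u (hwu_eq ▸ hwu)
  have hsc : s - ⟪u, centroid K⟫ ≤ ρ := by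
    have e : s - ⟪u, centroid K⟫ = ⟪u, z' - centroid K⟫ := by
      rw [inner_sub_right]
    rw [e]
    calc ⟪u, z' - centroid K⟫ ≤ ‖u‖ * ‖z' - centroid K‖ := real_inner_le_norm _ _
      _ = ‖centroid K - z'‖ := by rw [hu, one_mul, norm_sub_rev]
      _ ≤ ρ := hz'
  have hbs_ge : (b - a) / (d + 1) - ρ ≤ b - s := by linarith
  have hmax_nonneg : (0:ℝ) ≤ max 1 (width K v / width K u) :=
    le_trans zero_le_one (le_max_left _ _)
  refine ⟨?_, hupper⟩
  rcases le_or_gt b s with hcase | hcase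
  · -- the halfspace misses (almost) all of K : ρ must be large
    have hρ_big : (b - a) / (d + 1) ≤ ρ := by linarith
    have h1 : width K v / ((d:ℝ) + 1) ≤ ρ * (width K v / width K u) := by
      have e : (b - a) / ((d:ℝ) + 1) * (width K v / width K u) = width K v / ((d:ℝ)+1) := by
        rw [hwu_eq]
        have : b - a ≠ 0 := by rw [← hwu_eq]; exact hwu.ne'
        field_simp
      calc width K v / ((d:ℝ) + 1)
          = (b - a) / ((d:ℝ) + 1) * (width K v / width K u) := e.symm
        _ ≤ ρ * (width K v / width K u) :=
            mul_le_mul_of_nonneg_right hρ_big (div_nonneg hwv.le hwu.le)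
    have h2 : ρ * (width K v / width K u) ≤ ρ * max 1 (width K v / width K u) :=
      mul_le_mul_of_nonneg_left (le_max_right _ _) hρ
    have : (1 / ((d:ℝ) + 1)) * width K v = width K v / ((d:ℝ) + 1) := by ring
    linarith
  · -- main case : homothety from a top point of K in direction u
    obtain ⟨p, hpK, hp⟩ := hKcompact.exists_isMaxOn hne hcu.continuousOn
    have hpb : (⟪u, p⟫ : ℝ) = b := by
      refine le_antisymm (le_csSup hbu ⟨p, hpK, rfl⟩) (csSup_le (hne.image _) ?_)
      rintro y ⟨x, hx, rfl⟩; exact hp hx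
    have hba : 0 < b - a := hwu_eq ▸ hwu
    set l : ℝ := min 1 ((b - s) / (b - a)) with hl_def
    have hl0 : 0 < l := lt_min one_pos (div_pos (by linarith) hba)
    have hl1 : l ≤ 1 := min_le_left _ _
    have hlw : l * (b - a) ≤ b - s := by
      calc l * (b - a) ≤ (b - s) / (b - a) * (b - a) :=
            mul_le_mul_of_nonneg_right (min_le_right _ _) hba.le
        _ = b - s := div_mul_cancel₀ _ hba.ne'
    have hmemKp : ∀ x ∈ K, AffineMap.homothety p l x ∈ Kp := by
      intro x hx
      refine ⟨homothety_mem_of_convex hKconv hpK hx hl0.le hl1, ?_⟩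
      show 0 ≤ ⟪u, AffineMap.homothety p l x - z'⟫
      rw [inner_sub_right, inner_homothety, hpb]
      have hax : a ≤ ⟪u, x⟫ := csInf_le hbu' ⟨x, hx, rfl⟩
      have : l * a ≤ l * ⟪u, x⟫ := mul_le_mul_of_nonneg_left hax hl0.le
      have expand : l * a + (1 - l) * b - s = (b - s) - l * (b - a) := by ring
      linarith [hlw]
    -- pick extremal points of ⟪v,·⟫ on K
    obtain ⟨xp, hxpK, hxp⟩ := hKcompact.exists_isMaxOn hne hcv.continuousOn
    obtain ⟨xm, hxmK, hxm⟩ := hKcompact.exists_isMinOn hne hcv.continuousOn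
    have hxpv : (⟪v, xp⟫ : ℝ) = sSup ((fun x => ⟪v, x⟫) '' K) := by
      refine le_antisymm (le_csSup hbv ⟨xp, hxpK, rfl⟩) (csSup_le (hne.image _) ?_)
      rintro y ⟨x, hx, rfl⟩; exact hxp hx
    have hxmv : (⟪v, xm⟫ : ℝ) = sInf ((fun x => ⟪v, x⟫) '' K) := by
      refine le_antisymm (le_csInf (hne.image _) ?_) (csInf_le hbv' ⟨xm, hxmK, rfl⟩)
      rintro y ⟨x, hx, rfl⟩; exact hxm hx
    have hyp : AffineMap.homothety p l xp ∈ Kp := hmemKp xp hxpK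
    have hym : AffineMap.homothety p l xm ∈ Kp := hmemKp xm hxmK
    have hw1 : (⟪v, AffineMap.homothety p l xp⟫ : ℝ) ≤ sSup ((fun x => ⟪v, x⟫) '' Kp) :=
      le_csSup hKpbA ⟨_, hyp, rfl⟩
    have hw2 : sInf ((fun x => ⟪v, x⟫) '' Kp) ≤ ⟪v, AffineMap.homothety p l xm⟫ :=
      csInf_le hKpbB ⟨_, hym, rfl⟩
    have hdiff : (⟪v, AffineMap.homothety p l xp⟫ : ℝ) - ⟪v, AffineMap.homothety p l xm⟫
        = l * width K v := by
      rw [inner_homothety, inner_homothety, width, ← hxpv, ← hxmv]; ring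
    have hlow : l * width K v ≤ width Kp v := by
      have : width Kp v = sSup ((fun x => ⟪v, x⟫) '' Kp) - sInf ((fun x => ⟪v, x⟫) '' Kp) := rfl
      linarith
    refine le_trans ?_ hlow
    rcases min_cases 1 ((b - s) / (b - a)) with ⟨he, _⟩ | ⟨he, _⟩
    · -- l = 1
      rw [hl_def, he, one_mul]
      have hd1 : (1:ℝ) ≤ (d:ℝ) + 1 := by
        have : (0:ℝ) ≤ (d:ℝ) := Nat.cast_nonneg d
        linarith
      have h1 : (1 / ((d:ℝ) + 1)) * width K v ≤ 1 * width K v :=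
        mul_le_mul_of_nonneg_right (by rw [div_le_one (by linarith)]; linarith) hwv.le
      have h2 : 0 ≤ ρ * max 1 (width K v / width K u) := mul_nonneg hρ hmax_nonneg
      linarith
    · -- l = (b - s) / (b - a)
      have h3 : ((b - a) / ((d:ℝ) + 1) - ρ) / (b - a) ≤ l := by
        rw [hl_def, he]
        gcongr
      have h4 : (((b - a) / ((d:ℝ) + 1) - ρ) / (b - a)) * width K v ≤ l * width K v :=
        mul_le_mul_of_nonneg_right h3 hwv.le
      have e2 : (((b - a) / ((d:ℝ) + 1) - ρ) / (b - a)) * width K v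
          = (1 / ((d:ℝ) + 1)) * width K v - ρ * (width K v / (b - a)) := by
        field_simp
      have h5 : ρ * (width K v / (b - a)) ≤ ρ * max 1 (width K v / width K u) := by
        rw [hwu_eq]
        exact mul_le_mul_of_nonneg_left (le_max_right _ _) hρ
      linarith
end

section
/- Let K ⊂ ℝ^d be a convex body whose orthogonal projection onto the first coordinate axis equals the interval [0, 1] (i.e., {x⊤e₁ : x ∈ K} = [0, 1]). Then the first coordinate of the centroid z of K satisfies z⊤e₁ ≥ 1/(d+1). -/
open MeasureTheory Set
open scoped Pointwise

lemma slice_null {d : ℕ} (i : Fin d) (t : ℝ) :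
    volume {x : EuclideanSpace ℝ (Fin d) | x i = t} = 0 := by
  set e : EuclideanSpace ℝ (Fin d) := EuclideanSpace.single i (1:ℝ)
  have hker : volume ((LinearMap.ker ((EuclideanSpace.proj (𝕜 := ℝ) i : EuclideanSpace ℝ (Fin d) →L[ℝ] ℝ) : EuclideanSpace ℝ (Fin d) →ₗ[ℝ] ℝ) : Submodule ℝ (EuclideanSpace ℝ (Fin d))) : Set (EuclideanSpace ℝ (Fin d))) = 0 := by
    apply Measure.addHaar_submodule
    intro h
    have : e ∈ LinearMap.ker ((EuclideanSpace.proj (𝕜 := ℝ) i : EuclideanSpace ℝ (Fin d) →L[ℝ] ℝ) : EuclideanSpace ℝ (Fin d) →ₗ[ℝ] ℝ) := h ▸ Submodule.mem_top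
    simp [LinearMap.mem_ker, e, PiLp.proj_apply] at this
  have hset : {x : EuclideanSpace ℝ (Fin d) | x i = t}
      = (fun y => t • e + y) '' (LinearMap.ker ((EuclideanSpace.proj (𝕜 := ℝ) i : EuclideanSpace ℝ (Fin d) →L[ℝ] ℝ) : EuclideanSpace ℝ (Fin d) →ₗ[ℝ] ℝ) : Set (EuclideanSpace ℝ (Fin d))) := by
    ext x
    simp only [mem_setOf_eq, image_add_left, mem_preimage, SetLike.mem_coe, LinearMap.mem_ker]
    constructor
    · intro hx
      simp [PiLp.proj_apply, e, hx, EuclideanSpace.single_apply]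
    · intro hx
      simp [PiLp.proj_apply, e, EuclideanSpace.single_apply] at hx
      linarith
  rw [hset, image_add_left, measure_preimage_add]
  exact hker

/-- If the projection of a convex body `K ⊆ ℝ^d` onto the first coordinate axis is
`[0, 1]`, then the first coordinate of the centroid of `K` is at least `1/(d+1)`. -/
theorem centroid_first_coordinate {d : ℕ} (hd : 1 ≤ d)
    (K : Set (EuclideanSpace ℝ (Fin d)))
    (hKcompact : IsCompact K) (hKconv : Convex ℝ K) (hKint : (interior K).Nonempty)
    (hproj : (fun x : EuclideanSpace ℝ (Fin d) => x ⟨0, hd⟩) '' K = Icc 0 1) :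
    (1 : ℝ) / (d + 1) ≤ ((volume K).toReal⁻¹ • ∫ x in K, x) ⟨0, hd⟩ := by
  classical
  set i : Fin d := ⟨0, hd⟩
  have hKmeas : MeasurableSet K := hKcompact.measurableSet
  set V : ENNReal := volume K with hV
  have hVlt : V < ⊤ := hKcompact.measure_lt_top
  have hVpos : 0 < V := (isOpen_interior.measure_pos volume hKint).trans_le (measure_mono interior_subset)
  have hVtpos : 0 < V.toReal := ENNReal.toReal_pos hVpos.ne' hVlt.ne
  -- membership facts
  have hmem : ∀ x ∈ K, x i ∈ Icc (0:ℝ) 1 := by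
    intro x hx
    rw [← hproj]; exact mem_image_of_mem _ hx
  obtain ⟨b, hbK, hb1⟩ : ∃ b ∈ K, b i = 1 := by
    have : (1:ℝ) ∈ (fun x : EuclideanSpace ℝ (Fin d) => x i) '' K := by rw [hproj]; exact ⟨zero_le_one, le_refl 1⟩
    obtain ⟨b, hb, hb1⟩ := this
    exact ⟨b, hb, hb1⟩
  -- integrability of identity
  have hint : IntegrableOn (fun x : EuclideanSpace ℝ (Fin d) => x) K volume :=
    continuousOn_id.integrableOn_compact hKcompact
  have hcont : Continuous fun x : EuclideanSpace ℝ (Fin d) => x i := (EuclideanSpace.proj (𝕜 := ℝ) i).continuous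
  -- reduce the goal to a statement about the scalar integral
  have hcomp : (∫ x in K, x) i = ∫ x in K, x i := by
    have := (EuclideanSpace.proj (𝕜 := ℝ) i).integral_comp_comm hint
    exact this.symm
  have happ : ((volume K).toReal⁻¹ • ∫ x in K, x) i = (V.toReal)⁻¹ * ∫ x in K, x i := by
    rw [← hcomp]; rfl
  rw [happ, inv_mul_eq_div, le_div_iff₀ hVtpos]
  -- main inequality : V.toReal / (d+1) ≤ ∫ x in K, x i
  -- layer cake
  set f : EuclideanSpace ℝ (Fin d) → ℝ := fun x => x i with hf
  have f_nn : 0 ≤ᵐ[volume.restrict K] f :=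
    ae_restrict_of_forall_mem hKmeas fun x hx => (hmem x hx).1
  have hlayer : ∫⁻ x in K, ENNReal.ofReal (f x) ∂volume
      = ∫⁻ t in Ioi (0:ℝ), volume.restrict K {a | t < f a} :=
    lintegral_eq_lintegral_meas_lt _ f_nn hcont.aemeasurable
  -- lower bound for the superlevel measures
  have hlevel : ∀ t ∈ Ioo (0:ℝ) 1,
      ENNReal.ofReal ((1-t)^d) * V ≤ volume.restrict K {a | t < f a} := by
    intro t ht
    have hmlevel : MeasurableSet {a : EuclideanSpace ℝ (Fin d) | t < f a} :=
      measurableSet_lt measurable_const hcont.measurable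
    rw [Measure.restrict_apply hmlevel]
    -- the shrunk copy
    set A : Set (EuclideanSpace ℝ (Fin d)) := (fun x : EuclideanSpace ℝ (Fin d) => t • b + (1-t) • x) '' K with hA
    have hAsub : A ⊆ {a : EuclideanSpace ℝ (Fin d) | t ≤ f a} ∩ K := by
      rintro _ ⟨x, hx, rfl⟩
      constructor
      · have hx0 : 0 ≤ x i := (hmem x hx).1
        have : f (t • b + (1-t) • x) = t * b i + (1-t) * x i := rfl
        rw [mem_setOf_eq, this, hb1]
        nlinarith [ht.1.le, ht.2.le]
      · exact hKconv hbK hx ht.1.le (by linarith [ht.2.le]) (by ring)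
    have hAvol : volume A = ENNReal.ofReal ((1-t)^d) * V := by
      have : A = (fun y => t • b + y) '' ((1-t) • K) := by
        rw [← image_smul, image_image]
      rw [this, image_add_left, measure_preimage_add,
        Measure.addHaar_smul_of_nonneg volume (by linarith [ht.2] : (0:ℝ) ≤ 1 - t),
        finrank_euclideanSpace_fin]
    -- strict vs non-strict level sets
    have hsplit : {a : EuclideanSpace ℝ (Fin d) | t ≤ f a} ∩ K ⊆ ({a : EuclideanSpace ℝ (Fin d) | t < f a} ∩ K) ∪ {a : EuclideanSpace ℝ (Fin d) | a i = t} := by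
      rintro x ⟨hx1, hx2⟩
      rcases (show t ≤ f x from hx1).lt_or_eq with h | h
      · exact Or.inl ⟨h, hx2⟩
      · exact Or.inr h.symm
    calc ENNReal.ofReal ((1-t)^d) * V = volume A := hAvol.symm
      _ ≤ volume ({a : EuclideanSpace ℝ (Fin d) | t ≤ f a} ∩ K) := measure_mono hAsub
      _ ≤ volume (({a : EuclideanSpace ℝ (Fin d) | t < f a} ∩ K) ∪ {a : EuclideanSpace ℝ (Fin d) | a i = t}) := measure_mono hsplit
      _ ≤ volume ({a : EuclideanSpace ℝ (Fin d) | t < f a} ∩ K) + volume {a : EuclideanSpace ℝ (Fin d) | a i = t} := measure_union_le _ _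
      _ = volume ({a : EuclideanSpace ℝ (Fin d) | t < f a} ∩ K) := by rw [slice_null, add_zero]
  -- the elementary integral
  have hcalc : ∫ t in Ioo (0:ℝ) 1, (1-t)^d = 1/(d+1) := by
    rw [← integral_Ioc_eq_integral_Ioo, ← intervalIntegral.integral_of_le zero_le_one]
    have := intervalIntegral.integral_comp_sub_left (a := (0:ℝ)) (b := 1) (fun s => s ^ d) 1
    simp only [sub_zero, sub_self] at this
    rw [this, integral_pow]
    simp
  have hIoocont : IntegrableOn (fun t : ℝ => (1-t)^d) (Ioo 0 1) volume := by
    exact (((continuous_const.sub continuous_id).pow d).continuousOn.integrableOn_Icc).mono_set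
      Ioo_subset_Icc_self
  have hlintcalc : ∫⁻ t in Ioo (0:ℝ) 1, ENNReal.ofReal ((1-t)^d)
      = ENNReal.ofReal (1/(d+1)) := by
    rw [← ofReal_integral_eq_lintegral_ofReal hIoocont
      (ae_restrict_of_forall_mem measurableSet_Ioo fun t ht => pow_nonneg (by linarith [ht.2]) d), hcalc]
  -- chain of lintegral bounds
  have hmain : ENNReal.ofReal (1/(d+1)) * V ≤ ∫⁻ x in K, ENNReal.ofReal (f x) ∂volume := by
    rw [hlayer]
    calc ENNReal.ofReal (1/(d+1)) * V
        = (∫⁻ t in Ioo (0:ℝ) 1, ENNReal.ofReal ((1-t)^d)) * V := by rw [hlintcalc]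
      _ = ∫⁻ t in Ioo (0:ℝ) 1, ENNReal.ofReal ((1-t)^d) * V := by
          rw [lintegral_mul_const]
          exact (ENNReal.measurable_ofReal.comp ((continuous_const.sub continuous_id).pow d).measurable)
      _ ≤ ∫⁻ t in Ioo (0:ℝ) 1, volume.restrict K {a | t < f a} :=
          setLIntegral_mono' measurableSet_Ioo hlevel
      _ ≤ ∫⁻ t in Ioi (0:ℝ), volume.restrict K {a | t < f a} :=
          lintegral_mono_set Ioo_subset_Ioi_self
  -- finiteness
  have hfin : ∫⁻ x in K, ENNReal.ofReal (f x) ∂volume ≤ V := by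
    calc ∫⁻ x in K, ENNReal.ofReal (f x) ∂volume
        ≤ ∫⁻ _ in K, 1 ∂volume := setLIntegral_mono measurable_const
          (fun x hx => by simpa using ENNReal.ofReal_le_one.2 (hmem x hx).2)
      _ = V := by simp [hV]
  -- convert to real integral
  have hreal : ∫ x in K, x i = (∫⁻ x in K, ENNReal.ofReal (f x) ∂volume).toReal := by
    rw [integral_eq_lintegral_of_nonneg_ae f_nn (hcont.aestronglyMeasurable.restrict)]
  rw [hreal]
  have := ENNReal.toReal_mono (hfin.trans_lt hVlt).ne hmain
  rw [ENNReal.toReal_mul, ENNReal.toReal_ofReal (by positivity)] at this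
  calc (1:ℝ)/(d+1) * V.toReal ≤ (∫⁻ x in K, ENNReal.ofReal (f x) ∂volume).toReal := this
    _ = _ := rfl
end

section
/- Let d ≥ 2 and let r : [0, 1] → ℝ be a nonnegative concave function that is strictly positive on the open interval (0, 1). Let V = ∫₀¹ r(t)^{d−1} dt and define r̃(t) = (V·d)^{1/(d−1)}·(1 − t). Then ∫₀¹ r̃(t)^{d−1} dt = V and ∫₀¹ t·r̃(t)^{d−1} dt ≤ ∫₀¹ t·r(t)^{d−1} dt. -/
open MeasureTheory Set intervalIntegral

/-- Linearization step: for a nonnegative concave function `r` on `[0,1]` that is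
positive on `(0,1)`, the linear function `r̃(t) = (Vd)^{1/(d-1)}(1-t)`, where
`V = ∫₀¹ r(t)^{d-1} dt`, has the same integral of the `(d-1)`-st power, and a smaller
integral of `t` times the `(d-1)`-st power. -/
theorem linearize_concave_profile {d : ℕ} (hd : 2 ≤ d) (r : ℝ → ℝ)
    (hconc : ConcaveOn ℝ (Icc 0 1) r)
    (hnn : ∀ t ∈ Icc (0 : ℝ) 1, 0 ≤ r t)
    (hpos : ∀ t ∈ Ioo (0 : ℝ) 1, 0 < r t) :
    (∫ t in (0 : ℝ)..1,
        (((∫ τ in (0 : ℝ)..1, r τ ^ (d - 1)) * d) ^ (1 / ((d : ℝ) - 1)) * (1 - t))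
          ^ (d - 1)) =
      (∫ τ in (0 : ℝ)..1, r τ ^ (d - 1)) ∧
    (∫ t in (0 : ℝ)..1,
        t * (((∫ τ in (0 : ℝ)..1, r τ ^ (d - 1)) * d) ^ (1 / ((d : ℝ) - 1)) * (1 - t))
          ^ (d - 1)) ≤
      ∫ t in (0 : ℝ)..1, t * r t ^ (d - 1) := by
  set n := d - 1 with hn
  have hnd : (n : ℝ) + 1 = d := by
    have : n + 1 = d := by omega
    exact_mod_cast this
  have hdpos : (0:ℝ) < d := by positivity
  have hn1 : (0:ℝ) < (n:ℝ) + 1 := by rw [hnd]; exact hdpos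
  set f : ℝ → ℝ := fun t => r t ^ n with hf
  set V : ℝ := ∫ τ in (0:ℝ)..1, r τ ^ n with hV
  have hfnn : ∀ t ∈ Icc (0:ℝ) 1, 0 ≤ f t := fun t ht => pow_nonneg (hnn t ht) n
  have hVnn : 0 ≤ V := intervalIntegral.integral_nonneg zero_le_one hfnn
  -- continuity on the interior
  have hrc : ContinuousOn r (Ioo 0 1) :=
    (hconc.subset Ioo_subset_Icc_self (convex_Ioo 0 1)).continuousOn isOpen_Ioo
  have hfc : ContinuousOn f (Ioo 0 1) := hrc.pow n
  -- integrability
  have hi : IntervalIntegrable f volume 0 1 := by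
    rw [intervalIntegrable_iff_integrableOn_Ioc_of_le zero_le_one]
    have hmeas : AEStronglyMeasurable f (volume.restrict (Ioc (0:ℝ) 1)) := by
      rw [← Measure.restrict_congr_set Ioo_ae_eq_Ioc]
      exact hfc.aestronglyMeasurable measurableSet_Ioo
    refine ⟨hmeas, HasFiniteIntegral.of_bounded (C := (2 * r (1/2))^n) ?_⟩
    · filter_upwards [ae_restrict_mem measurableSet_Ioc] with t ht
      have ht' : t ∈ Icc (0:ℝ) 1 := Ioc_subset_Icc_self ht
      have h2 : r t ≤ 2 * r (1/2) := by
        have h1t : 1 - t ∈ Icc (0:ℝ) 1 := by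
          constructor <;> [linarith [ht'.2]; linarith [ht'.1]]
        have := hconc.2 ht' h1t (by norm_num : (0:ℝ) ≤ 1/2) (by norm_num : (0:ℝ) ≤ 1/2)
          (by norm_num)
        simp only [smul_eq_mul] at this
        have heq : (1:ℝ)/2 * t + 1/2 * (1 - t) = 1/2 := by ring
        rw [heq] at this
        have := hnn _ h1t
        linarith
      have hrt : 0 ≤ r t := hnn t ht'
      rw [hf]
      simp only [Real.norm_eq_abs, abs_pow, abs_of_nonneg hrt]
      exact pow_le_pow_left₀ hrt h2 n
  -- the constant
  set c : ℝ := (V * d) ^ (1 / ((d:ℝ) - 1)) with hc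
  have hcn : c ^ n = V * d := by
    rw [hc, ← Real.rpow_natCast ((V * (d:ℝ)) ^ (1 / ((d:ℝ) - 1))) n,
      ← Real.rpow_mul (by positivity)]
    have hne : (d:ℝ) - 1 ≠ 0 := by
      have : (2:ℝ) ≤ d := by exact_mod_cast hd
      intro h; nlinarith
    have : 1 / ((d:ℝ) - 1) * (n:ℝ) = 1 := by
      have : (n:ℝ) = (d:ℝ) - 1 := by linarith [hnd]
      rw [this]; field_simp
    rw [this, Real.rpow_one]
  -- elementary integrals
  have hI1' : ∀ m : ℕ, (∫ t in (0:ℝ)..1, (1 - t) ^ m) = 1 / ((m:ℝ)+1) := by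
    intro m
    have := intervalIntegral.integral_comp_sub_left (a := (0:ℝ)) (b := 1)
      (fun x => x ^ m) 1
    simp only [sub_self, sub_zero] at this
    rw [this, integral_pow]
    simp
  have hI1 := hI1' n
  have hI2 : (∫ t in (0:ℝ)..1, t * (1 - t) ^ n) = 1 / ((n:ℝ)+1) - 1 / ((n:ℝ)+2) := by
    have h0 := intervalIntegral.integral_comp_sub_left (a := (0:ℝ)) (b := 1)
      (fun x => (1 - x) * x ^ n) 1
    simp only [sub_self, sub_zero, sub_sub_cancel] at h0
    rw [h0]
    have : (∫ x in (0:ℝ)..1, (1 - x) * x ^ n) = ∫ x in (0:ℝ)..1, (x ^ n - x ^ (n+1)) := by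
      apply intervalIntegral.integral_congr; intro x _; ring
    rw [this, intervalIntegral.integral_sub (intervalIntegral.intervalIntegrable_pow n)
      (intervalIntegral.intervalIntegrable_pow (n+1)), integral_pow, integral_pow]
    push_cast
    field_simp
    ring
  -- first claim
  have claim1 : (∫ t in (0:ℝ)..1, (c * (1 - t)) ^ n) = V := by
    simp_rw [mul_pow]
    rw [intervalIntegral.integral_const_mul, hcn, hI1, hnd]
    field_simp
  -- tail bound
  have tail : ∀ s ∈ Icc (0:ℝ) 1, (1 - s) ^ d * V ≤ ∫ t in s..1, f t := by
    intro s hs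
    rcases eq_or_lt_of_le hs.2 with h1 | h1
    · rw [h1]; simp [zero_pow (by omega : d ≠ 0)]
    · have hc1 : (0:ℝ) < 1 - s := by linarith
      have hsub := intervalIntegral.integral_comp_mul_add (a := (0:ℝ)) (b := 1) f
        (ne_of_gt hc1) s
      simp only [mul_zero, zero_add, mul_one, sub_add_cancel, smul_eq_mul] at hsub
      have h1' : IntervalIntegrable f volume s 1 := hi.mono_set (by
        rw [uIcc_of_le hs.2, uIcc_of_le zero_le_one]
        exact Icc_subset_Icc hs.1 le_rfl)
      have hint : IntervalIntegrable (fun x => f ((1 - s) * x + s)) volume 0 1 := by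
        have h2 := (h1'.comp_add_right s).comp_mul_left (c := 1 - s)
        simpa [sub_self, zero_div, div_self (ne_of_gt hc1)] using h2
      have hmono : (∫ x in (0:ℝ)..1, (1 - s) ^ n * f x)
          ≤ ∫ x in (0:ℝ)..1, f ((1 - s) * x + s) := by
        apply intervalIntegral.integral_mono_on zero_le_one (hi.const_mul _) hint
        intro x hx
        have key : (1 - s) * r x ≤ r ((1 - s) * x + s) := by
          have := hconc.2 hx (right_mem_Icc.2 zero_le_one) hc1.le hs.1 (by ring)
          simp only [smul_eq_mul, mul_one] at this
          have h1 := hnn 1 (right_mem_Icc.2 zero_le_one)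
          nlinarith [mul_nonneg hs.1 h1]
        calc (1 - s) ^ n * f x = ((1 - s) * r x) ^ n := by
              simp only [hf, mul_pow]
          _ ≤ r ((1 - s) * x + s) ^ n :=
            pow_le_pow_left₀ (mul_nonneg hc1.le (hnn x hx)) key n
          _ = f ((1 - s) * x + s) := rfl
      rw [intervalIntegral.integral_const_mul] at hmono
      rw [hsub] at hmono
      have := mul_le_mul_of_nonneg_left hmono hc1.le
      calc (1 - s) ^ d * V = (1 - s) * ((1 - s) ^ n * V) := by
            rw [show d = n + 1 by omega, pow_succ']; ring
        _ ≤ (1 - s) * ((1 - s)⁻¹ * ∫ t in s..1, f t) := this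
        _ = ∫ t in s..1, f t := by
            field_simp
  -- primitive
  set F : ℝ → ℝ := fun s => ∫ t in (0:ℝ)..s, f t with hF
  have hF1 : F 1 = V := by rw [hF, hV]
  have hIcc : IntegrableOn f (Icc (0:ℝ) 1) := by
    rw [integrableOn_Icc_iff_integrableOn_Ioc]
    rwa [intervalIntegrable_iff_integrableOn_Ioc_of_le zero_le_one] at hi
  have hFcont : ContinuousOn F (Icc 0 1) := by
    have := intervalIntegral.continuousOn_primitive_interval (a := (0:ℝ)) (b := 1)
      (μ := volume) (f := f) (by rwa [uIcc_of_le zero_le_one])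
    rwa [uIcc_of_le zero_le_one] at this
  have hFadd : ∀ s ∈ Icc (0:ℝ) 1, F s + (∫ t in s..1, f t) = V := by
    intro s hs
    exact intervalIntegral.integral_add_adjacent_intervals
      (hi.mono_set (by rw [uIcc_of_le hs.1, uIcc_of_le zero_le_one]
                       exact Icc_subset_Icc le_rfl hs.2))
      (hi.mono_set (by rw [uIcc_of_le hs.2, uIcc_of_le zero_le_one]
                       exact Icc_subset_Icc hs.1 le_rfl))
  have hderiv : ∀ s ∈ Ioo (0:ℝ) 1, HasDerivAt F (f s) s := by
    intro s hs
    exact intervalIntegral.integral_hasDerivAt_right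
      (hi.mono_set (by rw [uIcc_of_le hs.1.le, uIcc_of_le zero_le_one]
                       exact Icc_subset_Icc le_rfl hs.2.le))
      (hfc.stronglyMeasurableAtFilter isOpen_Ioo s hs)
      (hfc.continuousAt (isOpen_Ioo.mem_nhds hs))
  have hg : ∀ s ∈ Ioo (0:ℝ) 1, HasDerivAt (fun u => u * F u) (F s + s * f s) s := by
    intro s hs
    have h := (hasDerivAt_id s).fun_mul (hderiv s hs)
    exact h.congr_deriv (by simp only [id_eq]; ring)
  have hsf_int : IntervalIntegrable (fun s => s * f s) volume 0 1 :=
    hi.continuousOn_mul continuousOn_id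
  have hFint : IntervalIntegrable F volume 0 1 :=
    (hFcont.mono (by rw [uIcc_of_le zero_le_one])).intervalIntegrable
  have hFTC : (∫ s in (0:ℝ)..1, (F s + s * f s)) = V := by
    rw [intervalIntegral.integral_eq_sub_of_hasDerivAt_of_le zero_le_one
      (continuousOn_id.mul hFcont) hg (hFint.add hsf_int)]
    simp [hF1]
  have hsplit : (∫ s in (0:ℝ)..1, F s) + (∫ s in (0:ℝ)..1, s * f s) = V := by
    rw [← intervalIntegral.integral_add hFint hsf_int]
    exact hFTC
  have hFbound : ∀ s ∈ Icc (0:ℝ) 1, F s ≤ (1 - (1-s)^d) * V := by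
    intro s hs
    have h1 := tail s hs
    have h2 := hFadd s hs
    nlinarith
  have hIntFbound : (∫ s in (0:ℝ)..1, F s) ≤ (1 - 1/((d:ℝ)+1)) * V := by
    have hle : (∫ s in (0:ℝ)..1, F s) ≤ ∫ s in (0:ℝ)..1, (1 - (1-s)^d) * V :=
      intervalIntegral.integral_mono_on zero_le_one hFint
        (Continuous.intervalIntegrable ((continuous_const.sub
          ((continuous_const.sub continuous_id).pow d)).mul continuous_const) _ _) hFbound
    have hId : (∫ s in (0:ℝ)..1, (1 - (1-s)^d) * V) = (1 - 1/((d:ℝ)+1)) * V := by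
      rw [intervalIntegral.integral_mul_const]
      congr 1
      have hcont2 : Continuous (fun x : ℝ => (1 - x)^d) := by fun_prop
      rw [intervalIntegral.integral_sub intervalIntegrable_const
        (hcont2.intervalIntegrable _ _), hI1' d]
      simp
    linarith
  have key : V / ((d:ℝ)+1) ≤ ∫ s in (0:ℝ)..1, s * f s := by
    have hd1 : ((d:ℝ)+1) ≠ 0 := by positivity
    have hexp : (1 - 1/((d:ℝ)+1)) * V = V - V/((d:ℝ)+1) := by
      field_simp
    linarith
  constructor
  · exact claim1
  · have lhs_eq : (∫ t in (0:ℝ)..1, t * (c * (1-t))^n) = V / ((d:ℝ)+1) := by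
      have h1 : (∫ t in (0:ℝ)..1, t * (c * (1-t))^n)
          = c^n * ∫ t in (0:ℝ)..1, t * (1-t)^n := by
        rw [← intervalIntegral.integral_const_mul]
        apply intervalIntegral.integral_congr
        intro x _
        simp only [mul_pow]
        ring
      rw [h1, hcn, hI2]
      have hn2 : (n:ℝ) + 2 = (d:ℝ) + 1 := by linarith
      rw [hnd, hn2]
      have h2 : ((d:ℝ)+1) ≠ 0 := by positivity
      field_simp
      ring
    rw [lhs_eq]
    exact key
end

section
/- Let d ≥ 2 and let r : [0, 1] → ℝ be a nonnegative concave function. Then ∫_{1/(d+1)}^{1} r(t)^{d−1} dt ≥ (1/e)·∫₀¹ r(t)^{d−1} dt. -/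
open MeasureTheory Set intervalIntegral

/-- For a nonnegative concave function `r` on `[0,1]`, the integral of `r^{d-1}` over
`[1/(d+1), 1]` is at least a `1/e` fraction of its integral over `[0,1]`. -/
theorem concave_tail_integral {d : ℕ} (hd : 2 ≤ d) (r : ℝ → ℝ)
    (hconc : ConcaveOn ℝ (Icc 0 1) r)
    (hnn : ∀ t ∈ Icc (0 : ℝ) 1, 0 ≤ r t) :
    (Real.exp 1)⁻¹ * ∫ t in (0 : ℝ)..1, r t ^ (d - 1) ≤
      ∫ t in (1 / ((d : ℝ) + 1))..1, r t ^ (d - 1) := by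
  have hd0 : (0 : ℝ) < d := by positivity
  have hd1 : (0 : ℝ) < (d : ℝ) + 1 := by positivity
  set a : ℝ := 1 / ((d : ℝ) + 1) with ha
  set μ : ℝ := (d : ℝ) / ((d : ℝ) + 1) with hμ
  have hμ0 : 0 < μ := by positivity
  have hμ1 : μ < 1 := by rw [hμ, div_lt_one hd1]; linarith
  have hμa : μ + a = 1 := by rw [hμ, ha]; field_simp
  have ha0 : 0 < a := by positivity
  set g : ℝ → ℝ := fun t => r t ^ (d - 1) with hg
  -- boundedness of r on [0,1]
  have hbd : ∀ t ∈ Icc (0 : ℝ) 1, r t ≤ 2 * r (1/2) := by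
    intro t ht
    have ht' : (1 : ℝ) - t ∈ Icc (0 : ℝ) 1 := ⟨by linarith [ht.2], by linarith [ht.1]⟩
    have := hconc.2 ht ht' (by norm_num : (0:ℝ) ≤ 1/2) (by norm_num : (0:ℝ) ≤ 1/2)
      (by norm_num)
    rw [smul_eq_mul, smul_eq_mul, smul_eq_mul, smul_eq_mul] at this
    have h2 : (1/2 : ℝ) * t + (1/2 : ℝ) * (1 - t) = 1/2 := by ring
    rw [h2] at this
    have := hnn _ ht'
    linarith
  -- integrability of g on [0,1]
  have hcont : ContinuousOn g (Ioo (0:ℝ) 1) := by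
    have : ContinuousOn r (Ioo (0:ℝ) 1) :=
      (hconc.subset Ioo_subset_Icc_self (convex_Ioo _ _)).continuousOn isOpen_Ioo
    exact this.pow _
  have hrestr : volume.restrict (Ioo (0:ℝ) 1) = volume.restrict (Ioc (0:ℝ) 1) :=
    Measure.restrict_congr_set Ioo_ae_eq_Ioc
  have hmeas : AEStronglyMeasurable g (volume.restrict (Ioc (0:ℝ) 1)) := by
    rw [← hrestr]; exact hcont.aestronglyMeasurable measurableSet_Ioo
  have hginteg : IntegrableOn g (Ioc (0:ℝ) 1) volume := by
    refine ⟨hmeas, HasFiniteIntegral.restrict_of_bounded (C := (2 * r (1/2)) ^ (d-1))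
      (by simp) ?_⟩
    filter_upwards [ae_restrict_mem measurableSet_Ioc] with t ht
    have ht' : t ∈ Icc (0:ℝ) 1 := ⟨le_of_lt ht.1, ht.2⟩
    rw [Real.norm_eq_abs, abs_of_nonneg (pow_nonneg (hnn t ht') _)]
    exact pow_le_pow_left₀ (hnn t ht') (hbd t ht') _
  have hgI : IntervalIntegrable g volume 0 1 :=
    (intervalIntegrable_iff_integrableOn_Ioc_of_le (by norm_num)).mpr hginteg
  -- integrability of the composed function
  have hgIa : IntervalIntegrable g volume a 1 := by
    apply hgI.mono_set
    have ha1 : a ≤ 1 := by rw [ha, div_le_one hd1]; linarith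
    rw [uIcc_of_le ha1, uIcc_of_le (by norm_num : (0:ℝ) ≤ 1)]
    exact Icc_subset_Icc (le_of_lt ha0) le_rfl
  have hcomp : IntervalIntegrable (fun s => g (μ * s + a)) volume 0 1 := by
    have h1 := (hgIa.comp_add_right a).comp_mul_left (c := μ)
    have h1a : (1 - a)/μ = 1 := by rw [show (1:ℝ) - a = μ by linarith, div_self hμ0.ne']
    simpa [sub_self, h1a] using h1
  -- pointwise inequality
  have hpt : ∀ s ∈ Icc (0:ℝ) 1, μ ^ (d-1) * r s ^ (d-1) ≤ g (μ * s + a) := by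
    intro s hs
    have h1 : (1 : ℝ) ∈ Icc (0:ℝ) 1 := ⟨by norm_num, le_rfl⟩
    have hkey := hconc.2 hs h1 (le_of_lt hμ0) (le_of_lt ha0) hμa
    have hsm : μ • s + a • (1:ℝ) = μ * s + a := by simp
    rw [hsm] at hkey
    rw [smul_eq_mul, smul_eq_mul] at hkey
    have hr1 : 0 ≤ r 1 := hnn _ h1
    have har : 0 ≤ a * r 1 := mul_nonneg ha0.le hr1
    have h2 : μ * r s ≤ r (μ * s + a) := by linarith
    have hmem : μ * s + a ∈ Icc (0:ℝ) 1 := by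
      constructor
      · nlinarith [hs.1]
      · nlinarith [hs.2]
    calc μ ^ (d-1) * r s ^ (d-1) = (μ * r s) ^ (d-1) := by rw [mul_pow]
      _ ≤ r (μ * s + a) ^ (d-1) :=
        pow_le_pow_left₀ (mul_nonneg (le_of_lt hμ0) (hnn s hs)) h2 _
  -- integral comparison
  have hmono : μ ^ (d-1) * ∫ s in (0:ℝ)..1, g s ≤ ∫ s in (0:ℝ)..1, g (μ * s + a) := by
    rw [← intervalIntegral.integral_const_mul]
    apply intervalIntegral.integral_mono_on (by norm_num) (hgI.const_mul _) hcomp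
    intro s hs
    exact hpt s hs
  -- substitution
  have hsub : ∫ s in (0:ℝ)..1, g (μ * s + a) = μ⁻¹ * ∫ t in a..1, g t := by
    rw [intervalIntegral.integral_comp_mul_add g hμ0.ne' a]
    simp [hμa, smul_eq_mul]
  have hnonneg : 0 ≤ ∫ s in (0:ℝ)..1, g s := by
    apply intervalIntegral.integral_nonneg (by norm_num)
    intro s hs
    exact pow_nonneg (hnn s hs) _
  -- μ^d ≥ e⁻¹
  have hμd : (Real.exp 1)⁻¹ ≤ μ ^ d := by
    have h1 : (1 + 1/(d:ℝ)) ^ d ≤ Real.exp 1 := by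
      have h2 : 1 + 1/(d:ℝ) ≤ Real.exp (1/(d:ℝ)) := by
        have := Real.add_one_le_exp (1/(d:ℝ)); linarith
      calc (1 + 1/(d:ℝ)) ^ d ≤ Real.exp (1/(d:ℝ)) ^ d :=
            pow_le_pow_left₀ (by positivity) h2 _
        _ = Real.exp 1 := by
            rw [← Real.exp_nat_mul, mul_one_div, div_self hd0.ne']
    have hinv : μ = (1 + 1/(d:ℝ))⁻¹ := by rw [hμ]; field_simp
    rw [hinv, inv_pow]
    exact inv_anti₀ (by positivity) h1
  -- combine
  have htail : μ ^ d * ∫ s in (0:ℝ)..1, g s ≤ ∫ t in a..1, g t := by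
    have := mul_le_mul_of_nonneg_left hmono (le_of_lt hμ0)
    rw [hsub] at this
    have hμd' : μ * (μ ^ (d-1) * ∫ s in (0:ℝ)..1, g s) = μ ^ d * ∫ s in (0:ℝ)..1, g s := by
      rw [← mul_assoc, ← pow_succ']
      congr 2
      omega
    rw [hμd', ← mul_assoc, mul_inv_cancel₀ hμ0.ne', one_mul] at this
    exact this
  calc (Real.exp 1)⁻¹ * ∫ t in (0:ℝ)..1, g t ≤ μ ^ d * ∫ t in (0:ℝ)..1, g t :=
        mul_le_mul_of_nonneg_right hμd hnonneg
    _ ≤ ∫ t in a..1, g t := htail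
end
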